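/- arXiv:2601.21705 — 9 statements merged into one kernel-verified Lean document; each statement's English description precedes it below -/
import Mathlib

section
/- For every ρ > 0, V_ρ(b*_ρ) = μ/ρ; equivalently, (e^{γ₁(ρ)b*_ρ} − e^{γ₂(ρ)b*_ρ})/(γ₁(ρ)e^{γ₁(ρ)b*_ρ} − γ₂(ρ)e^{γ₂(ρ)b*_ρ}) = μ/ρ = (γ₁(ρ) + γ₂(ρ))/(γ₁(ρ)·γ₂(ρ)). -/
open Real Set Filter

noncomputable def gam1 (μ σ ρ : ℝ) : ℝ := Real.sqrt (μ^2/σ^4 + 2*ρ/σ^2) - μ/σ^2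

noncomputable def gam2 (μ σ ρ : ℝ) : ℝ := -Real.sqrt (μ^2/σ^4 + 2*ρ/σ^2) - μ/σ^2

/-- The classical optimal dividend boundary `b*_ρ`. -/
noncomputable def bstar (μ σ ρ : ℝ) : ℝ :=
  Real.log ((gam2 μ σ ρ)^2 / (gam1 μ σ ρ)^2) / (gam1 μ σ ρ - gam2 μ σ ρ)

/-- The classical value function `V_ρ`. -/
noncomputable def Vfun (μ σ ρ x : ℝ) : ℝ :=
  if x < bstar μ σ ρ then
    (Real.exp (gam1 μ σ ρ * x) - Real.exp (gam2 μ σ ρ * x)) /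
      (gam1 μ σ ρ * Real.exp (gam1 μ σ ρ * bstar μ σ ρ) -
        gam2 μ σ ρ * Real.exp (gam2 μ σ ρ * bstar μ σ ρ))
  else
    (Real.exp (gam1 μ σ ρ * bstar μ σ ρ) - Real.exp (gam2 μ σ ρ * bstar μ σ ρ)) /
      (gam1 μ σ ρ * Real.exp (gam1 μ σ ρ * bstar μ σ ρ) -
        gam2 μ σ ρ * Real.exp (gam2 μ σ ρ * bstar μ σ ρ)) + x - bstar μ σ ρ

/-- `δ(y) = e^{γ₁(r+q)y} − e^{γ₂(r+q)y}`. -/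
noncomputable def del (μ σ r q y : ℝ) : ℝ :=
  Real.exp (gam1 μ σ (r+q) * y) - Real.exp (gam2 μ σ (r+q) * y)

/-- `δ'(y)`. -/
noncomputable def delP (μ σ r q y : ℝ) : ℝ :=
  gam1 μ σ (r+q) * Real.exp (gam1 μ σ (r+q) * y) -
    gam2 μ σ (r+q) * Real.exp (gam2 μ σ (r+q) * y)

/-- `δ''(y)`. -/
noncomputable def delPP (μ σ r q y : ℝ) : ℝ :=
  (gam1 μ σ (r+q))^2 * Real.exp (gam1 μ σ (r+q) * y) -
    (gam2 μ σ (r+q))^2 * Real.exp (gam2 μ σ (r+q) * y)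

/-- `y_u := b*_{r+q} + μ/r − μ/(r+q)`. -/
noncomputable def yUpper (μ σ r q : ℝ) : ℝ := bstar μ σ (r+q) + μ/r - μ/(r+q)

/-- `Δ(y)`. -/
noncomputable def DeltaF (μ σ r q y : ℝ) : ℝ :=
  (1/(gam1 μ σ r - gam2 μ σ r)) *
    Real.log ((gam2 μ σ r)^2 * (delP μ σ r q y - gam1 μ σ r * del μ σ r q y) /
      ((gam1 μ σ r)^2 * (delP μ σ r q y - gam2 μ σ r * del μ σ r q y)))

/-- `b*(y) = y + Δ(y)`. -/
noncomputable def bstarY (μ σ r q y : ℝ) : ℝ := y + DeltaF μ σ r q y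

noncomputable def psiF (μ σ ρ x : ℝ) : ℝ := Real.exp (gam1 μ σ ρ * x)
noncomputable def phiF (μ σ ρ x : ℝ) : ℝ := Real.exp (gam2 μ σ ρ * x)
noncomputable def psiP (μ σ ρ x : ℝ) : ℝ := gam1 μ σ ρ * Real.exp (gam1 μ σ ρ * x)
noncomputable def phiP (μ σ ρ x : ℝ) : ℝ := gam2 μ σ ρ * Real.exp (gam2 μ σ ρ * x)

/-- `η(y;b) = ψ'_r(b)φ_r(y) − φ'_r(b)ψ_r(y)`. -/
noncomputable def etaF (μ σ r y b : ℝ) : ℝ :=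
  psiP μ σ r b * phiF μ σ r y - phiP μ σ r b * psiF μ σ r y

/-- `η'(y;b)` (derivative in `y`). -/
noncomputable def etaP (μ σ r y b : ℝ) : ℝ :=
  psiP μ σ r b * phiP μ σ r y - phiP μ σ r b * psiP μ σ r y

/-- `K₁(y)`. -/
noncomputable def K1 (μ σ r q y : ℝ) : ℝ :=
  (psiF μ σ r y * etaP μ σ r y (bstarY μ σ r q y) -
    psiP μ σ r y * etaF μ σ r y (bstarY μ σ r q y)) /
  (psiP μ σ r (bstarY μ σ r q y) *
    (del μ σ r q y * etaP μ σ r y (bstarY μ σ r q y) -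
      delP μ σ r q y * etaF μ σ r y (bstarY μ σ r q y)))

/-- `K₂(y) = −K₁(y)`. -/
noncomputable def K2 (μ σ r q y : ℝ) : ℝ := -K1 μ σ r q y

/-- `K₃(y)`. -/
noncomputable def K3 (μ σ r q y : ℝ) : ℝ :=
  (phiP μ σ r (bstarY μ σ r q y) *
      (del μ σ r q y * psiP μ σ r y - delP μ σ r q y * psiF μ σ r y) +
    del μ σ r q y * etaP μ σ r y (bstarY μ σ r q y) -
      delP μ σ r q y * etaF μ σ r y (bstarY μ σ r q y)) /
  (psiP μ σ r (bstarY μ σ r q y) *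
    (del μ σ r q y * etaP μ σ r y (bstarY μ σ r q y) -
      delP μ σ r q y * etaF μ σ r y (bstarY μ σ r q y)))

/-- `K₄(y)`. -/
noncomputable def K4 (μ σ r q y : ℝ) : ℝ :=
  (psiF μ σ r y * delP μ σ r q y - psiP μ σ r y * del μ σ r q y) /
  (del μ σ r q y * etaP μ σ r y (bstarY μ σ r q y) -
    delP μ σ r q y * etaF μ σ r y (bstarY μ σ r q y))

/-- The candidate value function `w(·;y)` in the subcritical regime. -/
noncomputable def wfun (μ σ r q y x : ℝ) : ℝ :=
  if x < y then
    K1 μ σ r q y * Real.exp (gam1 μ σ (r+q) * x) + K2 μ σ r q y * Real.exp (gam2 μ σ (r+q) * x)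
  else if x < bstarY μ σ r q y then
    K3 μ σ r q y * Real.exp (gam1 μ σ r * x) + K4 μ σ r q y * Real.exp (gam2 μ σ r * x)
  else
    K3 μ σ r q y * Real.exp (gam1 μ σ r * bstarY μ σ r q y) +
      K4 μ σ r q y * Real.exp (gam2 μ σ r * bstarY μ σ r q y) + x - bstarY μ σ r q y

/-- The function `f` characterising the critical level `y_l`. -/
noncomputable def fF (μ σ r q y : ℝ) : ℝ :=
  (-(gam1 μ σ r / gam2 μ σ r) * delP μ σ r q y + gam1 μ σ r * del μ σ r q y) *
    ((gam2 μ σ r)^2/(gam1 μ σ r)^2 *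
      ((delP μ σ r q y - gam1 μ σ r * del μ σ r q y) /
        (delP μ σ r q y - gam2 μ σ r * del μ σ r q y)))
      ^ (gam1 μ σ r / (gam1 μ σ r - gam2 μ σ r))
  - delP μ σ r q (bstar μ σ (r+q))

noncomputable def e1F (μ σ r q b : ℝ) : ℝ :=
  (phiF μ σ (r+q) b - phiP μ σ (r+q) b * Vfun μ σ (r+q) b) /
  (psiP μ σ (r+q) b * phiF μ σ (r+q) b - psiF μ σ (r+q) b * phiP μ σ (r+q) b)

noncomputable def e2F (μ σ r q b : ℝ) : ℝ :=
  (psiP μ σ (r+q) b * Vfun μ σ (r+q) b - psiF μ σ (r+q) b) /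
  (psiP μ σ (r+q) b * phiF μ σ (r+q) b - psiF μ σ (r+q) b * phiP μ σ (r+q) b)

noncomputable def e3F (μ σ r q b y : ℝ) : ℝ :=
  (e1F μ σ r q b * (phiF μ σ r y * psiP μ σ (r+q) y - phiP μ σ r y * psiF μ σ (r+q) y) +
    e2F μ σ r q b * (phiF μ σ r y * phiP μ σ (r+q) y - phiP μ σ r y * phiF μ σ (r+q) y)) /
  (psiP μ σ r y * phiF μ σ r y - psiF μ σ r y * phiP μ σ r y)

noncomputable def e4F (μ σ r q b y : ℝ) : ℝ :=
  (e1F μ σ r q b * (psiP μ σ r y * psiF μ σ (r+q) y - psiF μ σ r y * psiP μ σ (r+q) y) +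
    e2F μ σ r q b * (psiP μ σ r y * phiF μ σ (r+q) y - psiF μ σ r y * phiP μ σ (r+q) y)) /
  (psiP μ σ r y * phiF μ σ r y - psiF μ σ r y * phiP μ σ r y)

/-- The function `H(b,y)` from the critical regime. -/
noncomputable def Hfun (μ σ r q b y : ℝ) : ℝ :=
  (gam1 μ σ r - gam2 μ σ r) *
    (-gam2 μ σ r / gam1 μ σ r) ^ ((gam1 μ σ r + gam2 μ σ r)/(gam1 μ σ r - gam2 μ σ r)) *
    (e3F μ σ r q b y) ^ (-gam2 μ σ r/(gam1 μ σ r - gam2 μ σ r)) *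
    (-e4F μ σ r q b y) ^ (gam1 μ σ r/(gam1 μ σ r - gam2 μ σ r))

/-- `Λ(b,y) = −e₄(b,y)/e₃(b,y)`. -/
noncomputable def Lamfun (μ σ r q b y : ℝ) : ℝ := -e4F μ σ r q b y / e3F μ σ r q b y

/-- `L(y)`. -/
noncomputable def Lfun (μ σ r q y : ℝ) : ℝ :=
  (1/(gam1 μ σ r - gam2 μ σ r)) *
    Real.log ((gam2 μ σ r)^2/(gam1 μ σ r)^2 * Lamfun μ σ r q y y) - y

/-- `V_ρ(b*_ρ) = μ/ρ`, with the explicit expression, and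
`μ/ρ = (γ₁(ρ)+γ₂(ρ))/(γ₁(ρ)·γ₂(ρ))`. -/
theorem stmt1 (μ σ r q : ℝ) (hμ : 0 < μ) (hσ : 0 < σ) (hr : 0 < r) (hq : 0 < q)
    (ρ : ℝ) (hρ : 0 < ρ) :
    Vfun μ σ ρ (bstar μ σ ρ) = μ/ρ ∧
    (Real.exp (gam1 μ σ ρ * bstar μ σ ρ) - Real.exp (gam2 μ σ ρ * bstar μ σ ρ)) /
      (gam1 μ σ ρ * Real.exp (gam1 μ σ ρ * bstar μ σ ρ) -
        gam2 μ σ ρ * Real.exp (gam2 μ σ ρ * bstar μ σ ρ)) = μ/ρ ∧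
    μ/ρ = (gam1 μ σ ρ + gam2 μ σ ρ) / (gam1 μ σ ρ * gam2 μ σ ρ) := by
  have hσ2 : (0:ℝ) < σ^2 := by positivity
  set s := Real.sqrt (μ^2/σ^4 + 2*ρ/σ^2) with hs
  have hs2 : s^2 = μ^2/σ^4 + 2*ρ/σ^2 := Real.sq_sqrt (by positivity)
  have hsgt : μ/σ^2 < s := by
    have h1 : (μ/σ^2)^2 < s^2 := by
      rw [hs2]; rw [div_pow]; have : σ^4 = (σ^2)^2 := by ring
      rw [this]; have : (0:ℝ) < 2*ρ/σ^2 := by positivity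
      linarith
    nlinarith [Real.sqrt_nonneg (μ^2/σ^4 + 2*ρ/σ^2), div_pos hμ hσ2]
  have hμσ : 0 < μ/σ^2 := div_pos hμ hσ2
  have hg1 : 0 < gam1 μ σ ρ := by unfold gam1; linarith
  have hg2 : gam2 μ σ ρ < 0 := by unfold gam2; linarith
  set g1 := gam1 μ σ ρ
  set g2 := gam2 μ σ ρ
  have hprod : g1 * g2 = -(2*ρ/σ^2) := by
    show (s - μ/σ^2) * (-s - μ/σ^2) = -(2*ρ/σ^2)
    have : σ^4 = (σ^2)^2 := by ring
    field_simp at hs2 ⊢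
    nlinarith [hs2]
  have hsum : g1 + g2 = -(2*μ/σ^2) := by
    show (s - μ/σ^2) + (-s - μ/σ^2) = -(2*μ/σ^2); ring
  have hlast : μ/ρ = (g1 + g2) / (g1 * g2) := by
    rw [hprod, hsum]
    rw [div_eq_div_iff (ne_of_gt hρ)]
    · field_simp
    · have : (0:ℝ) < 2*ρ/σ^2 := by positivity
      linarith
  -- key exp identity
  have hne : g1 - g2 ≠ 0 := by intro h; nlinarith
  have hkey : g1^2 * Real.exp (g1 * bstar μ σ ρ) = g2^2 * Real.exp (g2 * bstar μ σ ρ) := by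
    have hpos : (0:ℝ) < g2^2/g1^2 := div_pos (by nlinarith) (by nlinarith)
    have hb : (g1 - g2) * bstar μ σ ρ = Real.log (g2^2/g1^2) := by
      unfold bstar; rw [mul_div_assoc', mul_div_cancel_left₀ _ hne]
    have hexp : Real.exp ((g1 - g2) * bstar μ σ ρ) = g2^2/g1^2 := by
      rw [hb, Real.exp_log hpos]
    have : Real.exp (g1 * bstar μ σ ρ) =
        Real.exp (g2 * bstar μ σ ρ) * (g2^2/g1^2) := by
      rw [← hexp, ← Real.exp_add]; ring_nf
    rw [this]; field_simp
  have hE1 : 0 < Real.exp (g1 * bstar μ σ ρ) := Real.exp_pos _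
  have hE2 : 0 < Real.exp (g2 * bstar μ σ ρ) := Real.exp_pos _
  have hden : g1 * Real.exp (g1 * bstar μ σ ρ) - g2 * Real.exp (g2 * bstar μ σ ρ) ≠ 0 := by
    have : 0 < g1 * Real.exp (g1 * bstar μ σ ρ) := by positivity
    nlinarith [mul_pos hE2 (neg_pos.mpr hg2)]
  have hratio : (Real.exp (g1 * bstar μ σ ρ) - Real.exp (g2 * bstar μ σ ρ)) /
      (g1 * Real.exp (g1 * bstar μ σ ρ) - g2 * Real.exp (g2 * bstar μ σ ρ)) = μ/ρ := by
    rw [hlast, div_eq_div_iff hden (mul_ne_zero hg1.ne' hg2.ne)]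
    nlinarith [hkey]
  refine ⟨?_, hratio, hlast⟩
  unfold Vfun
  rw [if_neg (lt_irrefl _)]
  rw [hratio]; ring
end

section
/- The mapping ρ ↦ b*_ρ is strictly decreasing on (0,∞); that is, for all 0 < ρ₁ < ρ₂ one has b*_{ρ₂} < b*_{ρ₁}. -/
open Real Set Filter

lemma gfun_deriv (m s : ℝ) (hm : 0 < m) (hs : m < s) :
    HasDerivAt (fun t => (Real.log (t + m) - Real.log (t - m)) / t)
      (((1/(s+m) - 1/(s-m)) * s - (Real.log (s+m) - Real.log (s-m)) * 1) / s^2) s := by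
  have hsm : (0:ℝ) < s + m := by linarith
  have hsm' : (0:ℝ) < s - m := by linarith
  have h1 : HasDerivAt (fun t : ℝ => t + m) 1 s := (hasDerivAt_id s).add_const m
  have h2 : HasDerivAt (fun t : ℝ => t - m) 1 s := (hasDerivAt_id s).sub_const m
  have hl1 := h1.log hsm.ne'
  have hl2 := h2.log hsm'.ne'
  have := (hl1.sub hl2).div (hasDerivAt_id s) (by linarith : s ≠ 0)
  exact this

lemma gfun_anti (m : ℝ) (hm : 0 < m) :
    StrictAntiOn (fun s => (Real.log (s + m) - Real.log (s - m)) / s) (Set.Ioi m) := by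
  apply strictAntiOn_of_deriv_neg (convex_Ioi m)
  · exact fun s hs => (gfun_deriv m s hm hs).continuousAt.continuousWithinAt
  · intro s hs
    rw [interior_Ioi] at hs
    rw [(gfun_deriv m s hm hs).deriv]
    apply div_neg_of_neg_of_pos _ (by nlinarith [hs.out, hm] : (0:ℝ) < s^2)
    have hsm : (0:ℝ) < s + m := by linarith [hs.out]
    have hsm' : (0:ℝ) < s - m := by linarith [hs.out]
    have hlog : Real.log (s - m) < Real.log (s + m) :=
      Real.log_lt_log hsm' (by linarith)
    have hinv : 1/(s+m) < 1/(s-m) := by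
      apply one_div_lt_one_div_of_lt hsm' (by linarith)
    have ha : (1/(s+m) - 1/(s-m)) * s < 0 :=
      mul_neg_of_neg_of_pos (by linarith) (by linarith [hs.out, hm])
    nlinarith

lemma bstar_eq (μ σ ρ : ℝ) (hμ : 0 < μ) (hσ : 0 < σ) (hρ : 0 < ρ) :
    bstar μ σ ρ = (Real.log (Real.sqrt (μ^2/σ^4 + 2*ρ/σ^2) + μ/σ^2)
      - Real.log (Real.sqrt (μ^2/σ^4 + 2*ρ/σ^2) - μ/σ^2)) /
        Real.sqrt (μ^2/σ^4 + 2*ρ/σ^2) := by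
  set s := Real.sqrt (μ^2/σ^4 + 2*ρ/σ^2) with hsdef
  set m := μ/σ^2 with hmdef
  have hm : 0 < m := by positivity
  have hmsq : m^2 = μ^2/σ^4 := by rw [hmdef]; field_simp
  have hms : m < s := by
    rw [hsdef, ← hmsq]
    have : m = Real.sqrt (m^2) := by rw [Real.sqrt_sq hm.le]
    nth_rewrite 1 [this]
    apply Real.sqrt_lt_sqrt (by positivity)
    have : 0 < 2*ρ/σ^2 := by positivity
    linarith
  have hsm : (0:ℝ) < s + m := by linarith
  have hsm' : (0:ℝ) < s - m := by linarith
  have hs0 : (0:ℝ) < s := by linarith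
  have e1 : gam1 μ σ ρ = s - m := rfl
  have e2 : gam2 μ σ ρ = -s - m := rfl
  rw [bstar, e1, e2]
  have h2 : (-s - m)^2 = (s+m)^2 := by ring
  rw [h2]
  have : Real.log ((s+m)^2 / (s-m)^2)
      = 2 * (Real.log (s+m) - Real.log (s-m)) := by
    rw [Real.log_div (by positivity) (by positivity), Real.log_pow, Real.log_pow]
    push_cast; ring
  rw [this]
  have : s - m - (-s - m) = 2 * s := by ring
  rw [this]
  field_simp

/-- `ρ ↦ b*_ρ` is strictly decreasing on `(0,∞)`. -/
theorem stmt2 (μ σ r q : ℝ) (hμ : 0 < μ) (hσ : 0 < σ) (hr : 0 < r) (hq : 0 < q)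
    (ρ₁ ρ₂ : ℝ) (hρ₁ : 0 < ρ₁) (h12 : ρ₁ < ρ₂) :
    bstar μ σ ρ₂ < bstar μ σ ρ₁ := by
  have hρ₂ : 0 < ρ₂ := lt_trans hρ₁ h12
  rw [bstar_eq μ σ ρ₁ hμ hσ hρ₁, bstar_eq μ σ ρ₂ hμ hσ hρ₂]
  set m := μ/σ^2 with hmdef
  have hm : 0 < m := by positivity
  have hmsq : m^2 = μ^2/σ^4 := by rw [hmdef]; field_simp
  have key : ∀ ρ : ℝ, 0 < ρ → m < Real.sqrt (μ^2/σ^4 + 2*ρ/σ^2) := by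
    intro ρ hρ
    rw [← hmsq]
    have : m = Real.sqrt (m^2) := by rw [Real.sqrt_sq hm.le]
    nth_rewrite 1 [this]
    apply Real.sqrt_lt_sqrt (by positivity)
    have : 0 < 2*ρ/σ^2 := by positivity
    linarith
  have hlt : Real.sqrt (μ^2/σ^4 + 2*ρ₁/σ^2) < Real.sqrt (μ^2/σ^4 + 2*ρ₂/σ^2) := by
    apply Real.sqrt_lt_sqrt (by positivity)
    have h1 : 2*ρ₁/σ^2 < 2*ρ₂/σ^2 := by gcongr ?_ / ?_ <;> linarith
    linarith
  exact gfun_anti m hm (key ρ₁ hρ₁) (key ρ₂ hρ₂) hlt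
end

section
/- For every ρ > 0: (a) (σ²/2)V_ρ''(x) + μ·V_ρ'(x) − ρ·V_ρ(x) = 0 for all x ∈ (0, b*_ρ); (b) V_ρ(0) = 0; (c) V_ρ is twice continuously differentiable on (0,∞); in particular the one-sided limits at b*_ρ satisfy V_ρ'(b*_ρ−) = 1 and V_ρ''(b*_ρ−) = 0, matching the right-hand values V_ρ' ≡ 1 and V_ρ'' ≡ 0 on (b*_ρ,∞). -/
open Real Set Filter

noncomputable def d0f (μ σ ρ x : ℝ) : ℝ := Real.exp (gam1 μ σ ρ * x) - Real.exp (gam2 μ σ ρ * x)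
noncomputable def d1f (μ σ ρ x : ℝ) : ℝ :=
  gam1 μ σ ρ * Real.exp (gam1 μ σ ρ * x) - gam2 μ σ ρ * Real.exp (gam2 μ σ ρ * x)
noncomputable def d2f (μ σ ρ x : ℝ) : ℝ :=
  (gam1 μ σ ρ)^2 * Real.exp (gam1 μ σ ρ * x) - (gam2 μ σ ρ)^2 * Real.exp (gam2 μ σ ρ * x)

lemma hasDerivAt_exp_mul (c x : ℝ) :
    HasDerivAt (fun x => Real.exp (c * x)) (c * Real.exp (c * x)) x := by
  have h : HasDerivAt (fun x : ℝ => c * x) c x := by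
    simpa using (hasDerivAt_id x).const_mul c
  simpa [mul_comm] using h.exp

lemma hasDerivAt_d0f (μ σ ρ x : ℝ) : HasDerivAt (d0f μ σ ρ) (d1f μ σ ρ x) x :=
  (hasDerivAt_exp_mul _ x).sub (hasDerivAt_exp_mul _ x)

lemma hasDerivAt_d1f (μ σ ρ x : ℝ) : HasDerivAt (d1f μ σ ρ) (d2f μ σ ρ x) x := by
  have h := ((hasDerivAt_exp_mul (gam1 μ σ ρ) x).const_mul (gam1 μ σ ρ)).sub
    ((hasDerivAt_exp_mul (gam2 μ σ ρ) x).const_mul (gam2 μ σ ρ))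
  have e : d2f μ σ ρ x = gam1 μ σ ρ * (gam1 μ σ ρ * Real.exp (gam1 μ σ ρ * x)) - gam2 μ σ ρ * (gam2 μ σ ρ * Real.exp (gam2 μ σ ρ * x)) := by unfold d2f; ring
  rw [e]; exact h

lemma continuous_d1f (μ σ ρ : ℝ) : Continuous (d1f μ σ ρ) := by unfold d1f; fun_prop
lemma continuous_d2f (μ σ ρ : ℝ) : Continuous (d2f μ σ ρ) := by unfold d2f; fun_prop

-- piecewise description
lemma Vfun_left (μ σ ρ : ℝ) : ∀ x ∈ Iic (bstar μ σ ρ),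
    Vfun μ σ ρ x = d0f μ σ ρ x / d1f μ σ ρ (bstar μ σ ρ) := by
  intro x hx
  rcases lt_or_eq_of_le (mem_Iic.mp hx) with h | h
  · simp only [Vfun, if_pos h]; rfl
  · rw [h]
    simp only [Vfun, if_neg (lt_irrefl (bstar μ σ ρ))]
    show _ + bstar μ σ ρ - bstar μ σ ρ = _
    rw [add_sub_cancel_right]
    rfl

lemma Vfun_right (μ σ ρ : ℝ) : ∀ x ∈ Ici (bstar μ σ ρ),
    Vfun μ σ ρ x = d0f μ σ ρ (bstar μ σ ρ) / d1f μ σ ρ (bstar μ σ ρ) + x - bstar μ σ ρ := by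
  intro x hx
  simp only [Vfun, if_neg (not_lt.2 (mem_Ici.mp hx))]
  rfl

lemma hasDerivAt_Vfun (μ σ ρ : ℝ) (hD : d1f μ σ ρ (bstar μ σ ρ) ≠ 0) (x : ℝ) :
    HasDerivAt (Vfun μ σ ρ)
      (d1f μ σ ρ (min x (bstar μ σ ρ)) / d1f μ σ ρ (bstar μ σ ρ)) x := by
  set b := bstar μ σ ρ with hbdef
  set D := d1f μ σ ρ b with hDdef
  have hF1 : ∀ y : ℝ, HasDerivAt (fun z => d0f μ σ ρ z / D) (d1f μ σ ρ y / D) y :=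
    fun y => (hasDerivAt_d0f μ σ ρ y).div_const D
  have hF2 : ∀ y : ℝ, HasDerivAt (fun z => d0f μ σ ρ b / D + z - b) 1 y := by
    intro y
    simpa using (((hasDerivAt_id y).const_add (d0f μ σ ρ b / D)).sub_const b)
  rcases lt_trichotomy x b with h | h | h
  · rw [min_eq_left h.le]
    exact (hF1 x).congr_of_eventuallyEq
      (eventuallyEq_of_mem (Iio_mem_nhds h) (fun y hy => Vfun_left μ σ ρ y (mem_Iic.mpr (le_of_lt (mem_Iio.mp hy)))))
  · rw [h, min_self]
    rw [← hasDerivWithinAt_univ, ← Iic_union_Ici (a := b)]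
    refine HasDerivWithinAt.union ?_ ?_
    · exact ((hF1 b).hasDerivWithinAt).congr (Vfun_left μ σ ρ) (Vfun_left μ σ ρ b (mem_Iic.mpr le_rfl))
    · rw [div_self hD]
      exact ((hF2 b).hasDerivWithinAt).congr (Vfun_right μ σ ρ) (Vfun_right μ σ ρ b (mem_Ici.mpr le_rfl))
  · rw [min_eq_right h.le, div_self hD]
    exact (hF2 x).congr_of_eventuallyEq
      (eventuallyEq_of_mem (Ioi_mem_nhds h) (fun y hy => Vfun_right μ σ ρ y (mem_Ici.mpr (le_of_lt (mem_Ioi.mp hy)))))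

lemma deriv_Vfun (μ σ ρ : ℝ) (hD : d1f μ σ ρ (bstar μ σ ρ) ≠ 0) :
    deriv (Vfun μ σ ρ)
      = fun x => d1f μ σ ρ (min x (bstar μ σ ρ)) / d1f μ σ ρ (bstar μ σ ρ) :=
  funext fun x => (hasDerivAt_Vfun μ σ ρ hD x).deriv

lemma hasDerivAt_G (μ σ ρ : ℝ) (hd2b : d2f μ σ ρ (bstar μ σ ρ) = 0) (x : ℝ) :
    HasDerivAt (fun x => d1f μ σ ρ (min x (bstar μ σ ρ)) / d1f μ σ ρ (bstar μ σ ρ))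
      (d2f μ σ ρ (min x (bstar μ σ ρ)) / d1f μ σ ρ (bstar μ σ ρ)) x := by
  set b := bstar μ σ ρ with hbdef
  set D := d1f μ σ ρ b with hDdef
  have heq1 : ∀ y ∈ Iic b, d1f μ σ ρ (min y b) / D = d1f μ σ ρ y / D := by
    intro y hy; rw [min_eq_left (hy : y ≤ b)]
  have heq2 : ∀ y ∈ Ici b, d1f μ σ ρ (min y b) / D = d1f μ σ ρ b / D := by
    intro y hy; rw [min_eq_right (hy : b ≤ y)]
  have hF1 : ∀ y : ℝ, HasDerivAt (fun z => d1f μ σ ρ z / D) (d2f μ σ ρ y / D) y :=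
    fun y => (hasDerivAt_d1f μ σ ρ y).div_const D
  rcases lt_trichotomy x b with h | h | h
  · rw [min_eq_left h.le]
    exact (hF1 x).congr_of_eventuallyEq
      (eventuallyEq_of_mem (Iio_mem_nhds h) (fun y hy => heq1 y (mem_Iic.mpr (le_of_lt (mem_Iio.mp hy)))))
  · rw [h, min_self]
    rw [← hasDerivWithinAt_univ, ← Iic_union_Ici (a := b)]
    refine HasDerivWithinAt.union ?_ ?_
    · exact ((hF1 b).hasDerivWithinAt).congr heq1 (heq1 b (mem_Iic.mpr le_rfl))
    · rw [hd2b, zero_div]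
      exact ((hasDerivAt_const b (d1f μ σ ρ b / D)).hasDerivWithinAt).congr heq2 (heq2 b (mem_Ici.mpr le_rfl))
  · rw [min_eq_right h.le, hd2b, zero_div]
    exact (hasDerivAt_const x (d1f μ σ ρ b / D)).congr_of_eventuallyEq
      (eventuallyEq_of_mem (Ioi_mem_nhds h) (fun y hy => heq2 y (mem_Ici.mpr (le_of_lt (mem_Ioi.mp hy)))))

lemma deriv_deriv_Vfun (μ σ ρ : ℝ) (hD : d1f μ σ ρ (bstar μ σ ρ) ≠ 0)
    (hd2b : d2f μ σ ρ (bstar μ σ ρ) = 0) :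
    deriv (deriv (Vfun μ σ ρ))
      = fun x => d2f μ σ ρ (min x (bstar μ σ ρ)) / d1f μ σ ρ (bstar μ σ ρ) := by
  rw [deriv_Vfun μ σ ρ hD]
  exact funext fun x => (hasDerivAt_G μ σ ρ hd2b x).deriv
section Facts
variable {μ σ ρ : ℝ} (hμ : 0 < μ) (hσ : 0 < σ) (hρ : 0 < ρ)
include hμ hσ hρ

lemma hms : μ/σ^2 < Real.sqrt (μ^2/σ^4 + 2*ρ/σ^2) := by
  rw [show μ^2/σ^4 + 2*ρ/σ^2 = (μ/σ^2)^2 + 2*ρ/σ^2 by field_simp]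
  have h1 : 0 ≤ μ/σ^2 := by positivity
  have h2 : 0 < 2*ρ/σ^2 := by positivity
  exact (Real.lt_sqrt h1).2 (by linarith)

lemma hg1_pos : 0 < gam1 μ σ ρ := sub_pos.2 (hms hμ hσ hρ)

lemma hg2_neg : gam2 μ σ ρ < 0 := by
  have h := hms hμ hσ hρ
  have h2 : 0 < μ/σ^2 := by positivity
  unfold gam2; linarith

lemma hsum : gam1 μ σ ρ + gam2 μ σ ρ = -(2*μ/σ^2) := by unfold gam1 gam2; ring

lemma hs2' : Real.sqrt (μ^2/σ^4 + 2*ρ/σ^2) ^ 2 = (μ^2 + 2*ρ*σ^2)/σ^4 := by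
  have h : (0:ℝ) ≤ μ^2/σ^4 + 2*ρ/σ^2 := by positivity
  rw [Real.sq_sqrt h]
  have hσ0 : σ ≠ 0 := hσ.ne'
  field_simp

lemma hprod : (gam1 μ σ ρ * gam2 μ σ ρ) * σ^2 = -(2*ρ) := by
  have h := hs2' hμ hσ hρ
  have hσ0 : σ ≠ 0 := hσ.ne'
  have hgg : gam1 μ σ ρ * gam2 μ σ ρ
      = (μ/σ^2)^2 - Real.sqrt (μ^2/σ^4 + 2*ρ/σ^2)^2 := by
    unfold gam1 gam2; ring
  rw [hgg, h]
  field_simp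
  ring

lemma hq1 : σ^2/2 * (gam1 μ σ ρ)^2 + μ * gam1 μ σ ρ - ρ = 0 := by
  have h1 := hsum hμ hσ hρ
  have h2 := hprod hμ hσ hρ
  have hσ0 : σ ≠ 0 := hσ.ne'
  have h1' : (gam1 μ σ ρ + gam2 μ σ ρ) * σ^2 = -(2*μ) := by rw [h1]; field_simp
  linear_combination (gam1 μ σ ρ/2) * h1' - (1/2) * h2

lemma hq2 : σ^2/2 * (gam2 μ σ ρ)^2 + μ * gam2 μ σ ρ - ρ = 0 := by
  have h1 := hsum hμ hσ hρ
  have h2 := hprod hμ hσ hρ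
  have hσ0 : σ ≠ 0 := hσ.ne'
  have h1' : (gam1 μ σ ρ + gam2 μ σ ρ) * σ^2 = -(2*μ) := by rw [h1]; field_simp
  linear_combination (gam2 μ σ ρ/2) * h1' - (1/2) * h2

lemma hsq_lt : (gam1 μ σ ρ)^2 < (gam2 μ σ ρ)^2 := by
  have h1 := hg1_pos hμ hσ hρ
  have h2 := hg2_neg hμ hσ hρ
  have h3 := hsum hμ hσ hρ
  have h4 : 0 < 2*μ/σ^2 := by positivity
  have h5 : 0 < -(gam1 μ σ ρ + gam2 μ σ ρ) := by linarith
  nlinarith [mul_pos (by linarith : (0:ℝ) < gam1 μ σ ρ - gam2 μ σ ρ) h5]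

lemma hb_pos : 0 < bstar μ σ ρ := by
  have h1 := hg1_pos hμ hσ hρ
  have h2 := hg2_neg hμ hσ hρ
  have hlt := hsq_lt hμ hσ hρ
  exact div_pos (Real.log_pos ((one_lt_div (pow_pos h1 2)).2 hlt)) (by linarith)

lemma hd2b : d2f μ σ ρ (bstar μ σ ρ) = 0 := by
  have h1 := hg1_pos hμ hσ hρ
  have h2 := hg2_neg hμ hσ hρ
  have hlt := hsq_lt hμ hσ hρ
  have hne : gam1 μ σ ρ - gam2 μ σ ρ ≠ 0 := by intro h; linarith [sub_eq_zero.1 h ▸ h1]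
  have hbexp : Real.exp ((gam1 μ σ ρ - gam2 μ σ ρ) * bstar μ σ ρ)
      = (gam2 μ σ ρ)^2/(gam1 μ σ ρ)^2 := by
    rw [show (gam1 μ σ ρ - gam2 μ σ ρ) * bstar μ σ ρ
        = Real.log ((gam2 μ σ ρ)^2/(gam1 μ σ ρ)^2) by
      unfold bstar; field_simp]
    exact Real.exp_log (div_pos (pow_two_pos_of_ne_zero h2.ne) (pow_pos h1 2))
  rw [show (gam1 μ σ ρ - gam2 μ σ ρ) * bstar μ σ ρ
      = gam1 μ σ ρ * bstar μ σ ρ - gam2 μ σ ρ * bstar μ σ ρ by ring,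
    Real.exp_sub] at hbexp
  have he2 : Real.exp (gam2 μ σ ρ * bstar μ σ ρ) ≠ 0 := (Real.exp_pos _).ne'
  have hg1' : (gam1 μ σ ρ)^2 ≠ 0 := by positivity
  unfold d2f
  field_simp at hbexp
  rw [mul_comm (bstar μ σ ρ)] at hbexp
  linear_combination hbexp

lemma hD_pos : 0 < d1f μ σ ρ (bstar μ σ ρ) := by
  have h1 := hg1_pos hμ hσ hρ
  have h2 := hg2_neg hμ hσ hρ
  have e1 := Real.exp_pos (gam1 μ σ ρ * bstar μ σ ρ)
  have e2 := Real.exp_pos (gam2 μ σ ρ * bstar μ σ ρ)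
  unfold d1f
  nlinarith

end Facts


/-- `V_ρ` solves the ODE on `(0,b*_ρ)`, vanishes at `0`, is `C²` on `(0,∞)`,
with one-sided limits `V'(b*_ρ−)=1` and `V''(b*_ρ−)=0`, matching `V'≡1`, `V''≡0` on
`(b*_ρ,∞)`. -/
theorem stmt3 (μ σ r q : ℝ) (hμ : 0 < μ) (hσ : 0 < σ) (hr : 0 < r) (hq : 0 < q)
    (ρ : ℝ) (hρ : 0 < ρ) :
    (∀ x ∈ Set.Ioo 0 (bstar μ σ ρ),
      σ^2/2 * deriv (deriv (Vfun μ σ ρ)) x + μ * deriv (Vfun μ σ ρ) x - ρ * Vfun μ σ ρ x = 0) ∧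
    Vfun μ σ ρ 0 = 0 ∧
    ContDiffOn ℝ 2 (Vfun μ σ ρ) (Set.Ioi 0) ∧
    Filter.Tendsto (deriv (Vfun μ σ ρ))
      (nhdsWithin (bstar μ σ ρ) (Set.Iio (bstar μ σ ρ))) (nhds 1) ∧
    Filter.Tendsto (deriv (deriv (Vfun μ σ ρ)))
      (nhdsWithin (bstar μ σ ρ) (Set.Iio (bstar μ σ ρ))) (nhds 0) ∧
    (∀ x, bstar μ σ ρ < x → deriv (Vfun μ σ ρ) x = 1 ∧ deriv (deriv (Vfun μ σ ρ)) x = 0) := by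
  have hg1 := hg1_pos hμ hσ hρ
  have hg2 := hg2_neg hμ hσ hρ
  have hb := hb_pos hμ hσ hρ
  have hD := hD_pos hμ hσ hρ
  have hDne : d1f μ σ ρ (bstar μ σ ρ) ≠ 0 := hD.ne'
  have h2b := hd2b hμ hσ hρ
  have hdV := deriv_Vfun μ σ ρ hDne
  have hddV := deriv_deriv_Vfun μ σ ρ hDne h2b
  refine ⟨?_, ?_, ?_, ?_, ?_, ?_⟩
  · intro x hx
    rw [hddV, hdV]
    simp only [min_eq_left hx.2.le]
    rw [Vfun_left μ σ ρ x (mem_Iic.mpr hx.2.le)]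
    have e1 := hq1 hμ hσ hρ
    have e2 := hq2 hμ hσ hρ
    have expand : σ^2/2 * (d2f μ σ ρ x / d1f μ σ ρ (bstar μ σ ρ))
          + μ * (d1f μ σ ρ x / d1f μ σ ρ (bstar μ σ ρ))
          - ρ * (d0f μ σ ρ x / d1f μ σ ρ (bstar μ σ ρ))
        = ((σ^2/2 * (gam1 μ σ ρ)^2 + μ * gam1 μ σ ρ - ρ) * Real.exp (gam1 μ σ ρ * x)
          - (σ^2/2 * (gam2 μ σ ρ)^2 + μ * gam2 μ σ ρ - ρ) * Real.exp (gam2 μ σ ρ * x))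
            / d1f μ σ ρ (bstar μ σ ρ) := by
      unfold d0f d1f d2f; ring
    rw [expand, e1, e2]
    simp
  · rw [Vfun_left μ σ ρ 0 (mem_Iic.mpr hb.le)]
    simp [d0f]
  · have hc : ContDiff ℝ 2 (Vfun μ σ ρ) := by
      have h21 : (2 : WithTop ℕ∞) = (1 : WithTop ℕ∞) + 1 := by norm_num
      rw [h21, contDiff_succ_iff_deriv]
      refine ⟨fun x => (hasDerivAt_Vfun μ σ ρ hDne x).differentiableAt, by simp, ?_⟩
      rw [hdV]
      have h10 : (1 : WithTop ℕ∞) = (0 : WithTop ℕ∞) + 1 := by norm_num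
      rw [h10, contDiff_succ_iff_deriv]
      refine ⟨fun x => (hasDerivAt_G μ σ ρ h2b x).differentiableAt, by simp, ?_⟩
      have hder : deriv (fun x => d1f μ σ ρ (min x (bstar μ σ ρ)) / d1f μ σ ρ (bstar μ σ ρ))
          = fun x => d2f μ σ ρ (min x (bstar μ σ ρ)) / d1f μ σ ρ (bstar μ σ ρ) :=
        funext fun x => (hasDerivAt_G μ σ ρ h2b x).deriv
      rw [hder, contDiff_zero]
      exact ((continuous_d2f μ σ ρ).comp (continuous_id.min continuous_const)).div_const _
    exact hc.contDiffOn
  · rw [hdV]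
    have hcont : Continuous (fun x => d1f μ σ ρ (min x (bstar μ σ ρ)) / d1f μ σ ρ (bstar μ σ ρ)) :=
      ((continuous_d1f μ σ ρ).comp (continuous_id.min continuous_const)).div_const _
    have ht := (hcont.tendsto (bstar μ σ ρ)).mono_left
      (nhdsWithin_le_nhds (s := Set.Iio (bstar μ σ ρ)))
    simpa [min_self, div_self hDne] using ht
  · rw [hddV]
    have hcont : Continuous (fun x => d2f μ σ ρ (min x (bstar μ σ ρ)) / d1f μ σ ρ (bstar μ σ ρ)) :=
      ((continuous_d2f μ σ ρ).comp (continuous_id.min continuous_const)).div_const _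
    have ht := (hcont.tendsto (bstar μ σ ρ)).mono_left
      (nhdsWithin_le_nhds (s := Set.Iio (bstar μ σ ρ)))
    simpa [min_self, h2b] using ht
  · intro x hx
    constructor
    · rw [hdV]
      simp only [min_eq_right (le_of_lt hx), div_self hDne]
    · rw [hddV]
      simp only [min_eq_right (le_of_lt hx), h2b, zero_div]
end

section
/- For every ρ > 0 the function V_ρ satisfies V_ρ''(x) < 0 for all x ∈ (0, b*_ρ) (V_ρ is strictly concave on (0, b*_ρ)) and V_ρ'(x) ≥ 1 for all x > 0. -/
open Real Set Filter

lemma hasDerivAt_aexp' (a x : ℝ) : HasDerivAt (fun y => Real.exp (a*y)) (a * Real.exp (a*x)) x := by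
  simpa [mul_comm] using (HasDerivAt.exp ((hasDerivAt_id x).const_mul a))

lemma main_lemma (g1 g2 b : ℝ) (W : ℝ → ℝ) (hg1 : 0 < g1) (hg2 : g2 < 0) (hsum : g1 + g2 < 0)
    (hb : b = Real.log (g2^2/g1^2)/(g1-g2))
    (hW : ∀ x, W x = if x < b then
        (Real.exp (g1*x) - Real.exp (g2*x))/(g1*Real.exp (g1*b) - g2*Real.exp (g2*b))
      else
        (Real.exp (g1*b) - Real.exp (g2*b))/(g1*Real.exp (g1*b) - g2*Real.exp (g2*b)) + x - b) :
    (∀ x ∈ Set.Ioo 0 b, deriv (deriv W) x < 0) ∧ (∀ x, 0 < x → 1 ≤ deriv W x) := by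
  set D := g1*Real.exp (g1*b) - g2*Real.exp (g2*b) with hD_def
  have hdiff : 0 < g1 - g2 := by linarith
  have hsq : g1^2 < g2^2 := by nlinarith
  have hD : 0 < D := by
    have h1 : 0 < g1 * Real.exp (g1*b) := mul_pos hg1 (Real.exp_pos _)
    have h2 : g2 * Real.exp (g2*b) < 0 := mul_neg_of_neg_of_pos hg2 (Real.exp_pos _)
    rw [hD_def]; linarith
  have hb_pos : 0 < b := by
    rw [hb]
    exact div_pos (Real.log_pos ((one_lt_div (by positivity)).2 hsq)) hdiff
  have hkey : g1^2 * Real.exp ((g1-g2)*b) = g2^2 := by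
    have hbb : (g1-g2)*b = Real.log (g2^2/g1^2) := by
      rw [hb]; field_simp
    rw [hbb, Real.exp_log (div_pos (by nlinarith) (by positivity))]
    field_simp
  have hlt : ∀ x < b, g1^2 * Real.exp (g1*x) < g2^2 * Real.exp (g2*x) := by
    intro x hx
    have h1 : Real.exp ((g1-g2)*x) < Real.exp ((g1-g2)*b) :=
      Real.exp_lt_exp.2 (by nlinarith)
    calc g1^2*Real.exp (g1*x) = g1^2*Real.exp ((g1-g2)*x)*Real.exp (g2*x) := by
          rw [mul_assoc, ← Real.exp_add]; ring_nf
      _ < g1^2*Real.exp ((g1-g2)*b)*Real.exp (g2*x) := by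
          have h2 := Real.exp_pos (g2*x)
          have hg1sq : (0:ℝ) < g1^2 := by positivity
          exact mul_lt_mul_of_pos_right (mul_lt_mul_of_pos_left h1 hg1sq) h2
      _ = g2^2*Real.exp (g2*x) := by rw [hkey]
  have hfd : ∀ y, HasDerivAt (fun z => (Real.exp (g1*z) - Real.exp (g2*z))/D)
      ((g1*Real.exp (g1*y) - g2*Real.exp (g2*y))/D) y :=
    fun y => ((hasDerivAt_aexp' g1 y).sub (hasDerivAt_aexp' g2 y)).div_const D
  have hpd : ∀ y, HasDerivAt (fun z => (g1*Real.exp (g1*z) - g2*Real.exp (g2*z))/D)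
      ((g1^2*Real.exp (g1*y) - g2^2*Real.exp (g2*y))/D) y := by
    intro y
    have h := (((hasDerivAt_aexp' g1 y).const_mul g1).sub
      ((hasDerivAt_aexp' g2 y).const_mul g2)).div_const D
    exact h.congr_deriv (by ring)
  have hWf : ∀ y < b, W y = (Real.exp (g1*y) - Real.exp (g2*y))/D := by
    intro y hy; rw [hW y, if_pos hy]
  have hdW : ∀ x < b, deriv W x = (g1*Real.exp (g1*x) - g2*Real.exp (g2*x))/D := by
    intro x hx
    have hev : W =ᶠ[nhds x] fun z => (Real.exp (g1*z) - Real.exp (g2*z))/D :=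
      Filter.eventuallyEq_of_mem (Iio_mem_nhds hx) (fun y hy => hWf y hy)
    rw [hev.deriv_eq, (hfd x).deriv]
  have hdW2 : ∀ x, b < x → deriv W x = 1 := by
    intro x hx
    have hev : W =ᶠ[nhds x] fun z => (Real.exp (g1*b) - Real.exp (g2*b))/D + z - b :=
      Filter.eventuallyEq_of_mem (Ioi_mem_nhds hx)
        (fun y hy => by rw [hW y, if_neg (not_lt.2 (le_of_lt hy))])
    rw [hev.deriv_eq]
    have h : HasDerivAt (fun z => (Real.exp (g1*b) - Real.exp (g2*b))/D + z - b) 1 x := by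
      simpa using (((hasDerivAt_id x).const_add ((Real.exp (g1*b) - Real.exp (g2*b))/D)).sub_const b)
    exact h.deriv
  have hWb1 : deriv W b = 1 := by
    have h1 : HasDerivWithinAt W 1 (Set.Iic b) b := by
      have hd : HasDerivAt (fun z => (Real.exp (g1*z) - Real.exp (g2*z))/D) 1 b := by
        have h := hfd b
        rwa [show (g1*Real.exp (g1*b) - g2*Real.exp (g2*b))/D = 1 from div_self (ne_of_gt hD)] at h
      refine (hd.hasDerivWithinAt).congr ?_ ?_
      · intro y hy
        rcases lt_or_eq_of_le (Set.mem_Iic.1 hy) with h | h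
        · exact hWf y h
        · subst h; rw [hW y, if_neg (lt_irrefl y)]; ring
      · rw [hW b, if_neg (lt_irrefl b)]; ring
    have h2 : HasDerivWithinAt W 1 (Set.Ici b) b := by
      have hd : HasDerivAt (fun z => (Real.exp (g1*b) - Real.exp (g2*b))/D + z - b) 1 b := by
        simpa using (((hasDerivAt_id b).const_add ((Real.exp (g1*b) - Real.exp (g2*b))/D)).sub_const b)
      refine (hd.hasDerivWithinAt).congr ?_ ?_
      · intro y hy; rw [hW y, if_neg (not_lt.2 hy)]
      · rw [hW b, if_neg (lt_irrefl b)]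
    have h3 := h1.union h2
    rw [Set.Iic_union_Ici, hasDerivWithinAt_univ] at h3
    exact h3.deriv
  constructor
  · intro x hx
    have hev : deriv W =ᶠ[nhds x] fun z => (g1*Real.exp (g1*z) - g2*Real.exp (g2*z))/D :=
      Filter.eventuallyEq_of_mem (Iio_mem_nhds hx.2) (fun y hy => hdW y hy)
    rw [hev.deriv_eq, (hpd x).deriv]
    exact div_neg_of_neg_of_pos (by linarith [hlt x hx.2]) hD
  · intro x hx0
    rcases lt_trichotomy x b with h | h | h
    · rw [hdW x h]
      have hmono : StrictAntiOn (fun z => g1*Real.exp (g1*z) - g2*Real.exp (g2*z)) (Icc 0 b) := by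
        apply strictAntiOn_of_deriv_neg (convex_Icc 0 b)
        · fun_prop
        · intro y hy
          rw [interior_Icc] at hy
          have hd := (((hasDerivAt_aexp' g1 y).const_mul g1).sub
            ((hasDerivAt_aexp' g2 y).const_mul g2)).deriv
          rw [show (fun z => g1*Real.exp (g1*z) - g2*Real.exp (g2*z)) =
            ((fun y => g1 * Real.exp (g1 * y)) - fun y => g2 * Real.exp (g2 * y)) from rfl, hd]
          nlinarith [hlt y hy.2]
      have hm := hmono ⟨le_of_lt hx0, le_of_lt h⟩ ⟨le_of_lt hb_pos, le_refl b⟩ h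
      simp only at hm
      rw [one_le_div hD]
      rw [hD_def]
      linarith
    · subst h; rw [hWb1]
    · rw [hdW2 x h]


/-- `V_ρ'' < 0` on `(0,b*_ρ)` and `V_ρ' ≥ 1` on `(0,∞)`. -/
theorem stmt4 (μ σ r q : ℝ) (hμ : 0 < μ) (hσ : 0 < σ) (hr : 0 < r) (hq : 0 < q)
    (ρ : ℝ) (hρ : 0 < ρ) :
    (∀ x ∈ Set.Ioo 0 (bstar μ σ ρ), deriv (deriv (Vfun μ σ ρ)) x < 0) ∧
    (∀ x, 0 < x → 1 ≤ deriv (Vfun μ σ ρ) x) := by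

  have hg1 : 0 < gam1 μ σ ρ := by
    unfold gam1
    have h : μ/σ^2 < Real.sqrt (μ^2/σ^4 + 2*ρ/σ^2) := by
      rw [show μ^2/σ^4 + 2*ρ/σ^2 = (μ/σ^2)^2 + 2*ρ/σ^2 by ring]
      nlinarith [Real.sq_sqrt (by positivity : (0:ℝ) ≤ (μ/σ^2)^2 + 2*ρ/σ^2),
        Real.sqrt_nonneg ((μ/σ^2)^2 + 2*ρ/σ^2),
        sq_nonneg (Real.sqrt ((μ/σ^2)^2 + 2*ρ/σ^2) - μ/σ^2),
        div_pos hμ (by positivity : (0:ℝ) < σ^2),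
        div_pos (by positivity : (0:ℝ) < 2*ρ) (by positivity : (0:ℝ) < σ^2)]
    linarith
  have hg2 : gam2 μ σ ρ < 0 := by
    unfold gam2
    have h1 := Real.sqrt_nonneg (μ^2/σ^4 + 2*ρ/σ^2)
    have h2 : 0 < μ/σ^2 := by positivity
    linarith
  have hsum : gam1 μ σ ρ + gam2 μ σ ρ < 0 := by
    have h2 : 0 < μ/σ^2 := by positivity
    have : gam1 μ σ ρ + gam2 μ σ ρ = -2*(μ/σ^2) := by unfold gam1 gam2; ring
    linarith
  exact main_lemma (gam1 μ σ ρ) (gam2 μ σ ρ) (bstar μ σ ρ) (Vfun μ σ ρ) hg1 hg2 hsum rfl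
    (fun x => rfl)
end

section
/- Let y ≥ b*_{r+q}. Then the following are equivalent: (i) y ≥ y_u; (ii) μ − (r+q)·V_{r+q}(x) ≤ 0 for all x ∈ (b*_{r+q}, y) and μ − r·V_{r+q}(x) ≤ 0 for all x ≥ y. In particular, if y < y_u then μ − r·V_{r+q}(y) = μ − r·(y − b*_{r+q} + μ/(r+q)) > 0. -/
open Real Set Filter

set_option maxHeartbeats 800000 in
lemma Vfun_flat (μ σ ρ : ℝ) (hμ : 0 < μ) (hσ : 0 < σ) (hρ : 0 < ρ)
    (x : ℝ) (hx : bstar μ σ ρ ≤ x) :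
    Vfun μ σ ρ x = μ/ρ + x - bstar μ σ ρ := by
  have hσ2 : (0:ℝ) < σ^2 := by positivity
  set m : ℝ := μ/σ^2 with hm
  have hmpos : 0 < m := by positivity
  set s : ℝ := Real.sqrt (μ^2/σ^4 + 2*ρ/σ^2) with hs
  have harg : (0:ℝ) ≤ μ^2/σ^4 + 2*ρ/σ^2 := by positivity
  have hs2 : s^2 = m^2 + 2*ρ/σ^2 := by
    rw [hs, Real.sq_sqrt harg, hm]
    field_simp
  have hsm : m < s := by
    nlinarith [Real.sqrt_nonneg (μ^2/σ^4 + 2*ρ/σ^2), div_pos (by linarith : (0:ℝ) < 2*ρ) hσ2]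
  set g1 : ℝ := gam1 μ σ ρ with hg1
  set g2 : ℝ := gam2 μ σ ρ with hg2
  have hg1e : g1 = s - m := by rw [hg1, gam1]
  have hg2e : g2 = -s - m := by rw [hg2, gam2]
  have hg1pos : 0 < g1 := by rw [hg1e]; linarith
  have hg2neg : g2 < 0 := by rw [hg2e]; nlinarith
  have hsum : g1 + g2 = -(2*μ/σ^2) := by
    rw [hg1e, hg2e, hm]; field_simp; ring
  have hprod : g1 * g2 = -(2*ρ/σ^2) := by
    rw [hg1e, hg2e]; nlinarith [hs2]
  set b : ℝ := bstar μ σ ρ with hb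
  set A : ℝ := Real.exp (g1 * b) with hA
  set B : ℝ := Real.exp (g2 * b) with hB
  have hApos : 0 < A := Real.exp_pos _
  have hBpos : 0 < B := Real.exp_pos _
  have hratio : A / B = g2^2/g1^2 := by
    rw [hA, hB, ← Real.exp_sub]
    have : g1 * b - g2 * b = (g1 - g2) * b := by ring
    rw [this, hb, bstar, ← hg1, ← hg2]
    rw [mul_div_cancel₀ _ (by nlinarith : g1 - g2 ≠ 0)]
    exact Real.exp_log (div_pos (by nlinarith) (by nlinarith))
  have hAB : g1^2 * A = g2^2 * B := by
    have := (div_eq_div_iff hBpos.ne' (by positivity : (0:ℝ) < g1^2).ne').mp hratio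
    linarith [this]
  have hden : 0 < g1 * A - g2 * B := by nlinarith
  have hμe : μ = -(σ^2/2)*(g1+g2) := by rw [hsum]; field_simp
  have hρe : ρ = -(σ^2/2)*(g1*g2) := by rw [hprod]; field_simp
  have key : (A - B) / (g1 * A - g2 * B) = μ/ρ := by
    rw [div_eq_div_iff hden.ne' hρ.ne']
    linear_combination (A-B)*hρe - (g1*A-g2*B)*hμe + (σ^2/2)*hAB
  rw [Vfun, if_neg (not_lt.mpr hx), ← hg1, ← hg2, ← hb, ← hA, ← hB, key]

/-- for `y ≥ b*_{r+q}`, `y ≥ y_u` iff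
`μ − (r+q)V_{r+q} ≤ 0` on `(b*_{r+q},y)` and `μ − rV_{r+q} ≤ 0` on `[y,∞)`;
and if `y < y_u` then `μ − rV_{r+q}(y) = μ − r(y − b*_{r+q} + μ/(r+q)) > 0`. -/

theorem stmt5 (μ σ r q : ℝ) (hμ : 0 < μ) (hσ : 0 < σ) (hr : 0 < r) (hq : 0 < q)
    (y : ℝ) (hy : bstar μ σ (r+q) ≤ y) :
    (yUpper μ σ r q ≤ y ↔
      ((∀ x ∈ Set.Ioo (bstar μ σ (r+q)) y, μ - (r+q) * Vfun μ σ (r+q) x ≤ 0) ∧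
       (∀ x, y ≤ x → μ - r * Vfun μ σ (r+q) x ≤ 0))) ∧
    (y < yUpper μ σ r q →
      (μ - r * Vfun μ σ (r+q) y = μ - r * (y - bstar μ σ (r+q) + μ/(r+q)) ∧
       0 < μ - r * Vfun μ σ (r+q) y)) := by
  have hρ : 0 < r + q := by linarith
  have hV : ∀ x, bstar μ σ (r+q) ≤ x → Vfun μ σ (r+q) x = μ/(r+q) + x - bstar μ σ (r+q) :=
    fun x hx => Vfun_flat μ σ (r+q) hμ hσ hρ x hx
  have hyu : yUpper μ σ r q = bstar μ σ (r+q) + μ/r - μ/(r+q) := rfl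
  have hmr : r * (μ/r) = μ := mul_div_cancel₀ μ hr.ne'
  have hmrq : (r+q) * (μ/(r+q)) = μ := mul_div_cancel₀ μ hρ.ne'
  constructor
  · constructor
    · intro hyy
      constructor
      · intro x hx
        rw [hV x hx.1.le]
        nlinarith [hx.1]
      · intro x hx
        rw [hV x (le_trans hy hx)]
        have h1 : μ/r - μ/(r+q) ≤ x - bstar μ σ (r+q) := by
          rw [hyu] at hyy; linarith
        nlinarith [mul_le_mul_of_nonneg_left h1 hr.le]
    · rintro ⟨-, h2⟩
      have := h2 y le_rfl
      rw [hV y hy] at this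
      rw [hyu]
      nlinarith
  · intro hlt
    rw [hyu] at hlt
    rw [hV y hy]
    constructor
    · ring
    · nlinarith
end

section
/- Let ρ > 0 and x̄ ≥ 0, and let f : [x̄,∞) → ℝ be twice continuously differentiable with (σ²/2)f''(x) + μ·f'(x) − ρ·f(x) = 0 for all x > x̄, f(x̄) ≥ 0 and f'(x̄) > 0. Then f'(x) > 0 for all x > x̄; in particular f is strictly increasing on (x̄,∞). -/
open Real Set Filter
open Topology

/-- if `f` is `C²` on `[x̄,∞)`, solves the ODE on `(x̄,∞)`, with `f(x̄) ≥ 0`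
and `f'(x̄) > 0`, then `f' > 0` on `(x̄,∞)`; in particular `f` is strictly increasing there. -/
theorem stmt6 (μ σ : ℝ) (hμ : 0 < μ) (hσ : 0 < σ)
    (ρ : ℝ) (hρ : 0 < ρ) (xbar : ℝ) (hxbar : 0 ≤ xbar)
    (f : ℝ → ℝ) (hf : ContDiffOn ℝ 2 f (Set.Ici xbar))
    (hODE : ∀ x, xbar < x → σ^2/2 * deriv (deriv f) x + μ * deriv f x - ρ * f x = 0)
    (hf0 : 0 ≤ f xbar) (hf1 : 0 < derivWithin f (Set.Ici xbar) xbar) :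
    (∀ x, xbar < x → 0 < deriv f x) ∧ StrictMonoOn f (Set.Ioi xbar) := by
  have hσ2 : (0:ℝ) < σ ^ 2 := by positivity
  set g : ℝ → ℝ := derivWithin f (Set.Ici xbar) with hgdef
  have hgx : ∀ x, xbar < x → deriv f x = g x := fun x hx =>
    (derivWithin_of_mem_nhds (Ici_mem_nhds hx)).symm
  have hgc : ContinuousOn g (Set.Ici xbar) :=
    hf.continuousOn_derivWithin (uniqueDiffOn_Ici xbar) one_le_two
  have hfc : ContinuousOn f (Set.Ici xbar) := hf.continuousOn
  have key : ∀ x, xbar < x → 0 < g x := by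
    by_contra hcon
    push_neg at hcon
    obtain ⟨x₁, hx₁, hgx₁⟩ := hcon
    set T : Set ℝ := Set.Ici xbar ∩ g ⁻¹' Set.Iic 0 with hT
    have hTne : T.Nonempty := ⟨x₁, le_of_lt hx₁, hgx₁⟩
    have hTbdd : BddBelow T := ⟨xbar, fun x hx => hx.1⟩
    have hTclosed : IsClosed T :=
      hgc.preimage_isClosed_of_isClosed isClosed_Ici isClosed_Iic
    set x₀ := sInf T with hx₀def
    have hx₀T : x₀ ∈ T := hTclosed.csInf_mem hTne hTbdd
    have hx₀le : g x₀ ≤ 0 := hx₀T.2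
    have hx₀gt : xbar < x₀ := by
      rcases lt_or_eq_of_le (Set.mem_Ici.1 hx₀T.1) with h | h
      · exact h
      · exact absurd hx₀le (by rw [← h]; exact not_le.2 hf1)
    have hpos : ∀ x ∈ Set.Ioo xbar x₀, 0 < g x := by
      intro x hx
      by_contra h
      exact absurd (csInf_le hTbdd ⟨le_of_lt hx.1, not_lt.1 h⟩) (not_le.2 hx.2)
    have hx₀0 : g x₀ = 0 := by
      refine le_antisymm hx₀le ?_
      have hcl : x₀ ∈ closure (Set.Ioo xbar x₀) := by
        rw [closure_Ioo (ne_of_lt hx₀gt)]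
        exact ⟨le_of_lt hx₀gt, le_rfl⟩
      haveI := mem_closure_iff_nhdsWithin_neBot.1 hcl
      have ht : Filter.Tendsto g (𝓝[Set.Ioo xbar x₀] x₀) (𝓝 (g x₀)) :=
        (hgc x₀ hx₀T.1).mono_left
          (nhdsWithin_mono _ (fun x hx => le_of_lt hx.1))
      exact ge_of_tendsto ht (eventually_mem_nhdsWithin.mono fun x hx => (hpos x hx).le)
    have hmono : StrictMonoOn f (Set.Icc xbar x₀) := by
      refine strictMonoOn_of_deriv_pos (convex_Icc _ _)
        (hfc.mono (Set.Icc_subset_Ici_self)) ?_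
      intro x hx
      rw [interior_Icc] at hx
      rw [hgx x hx.1]
      exact hpos x hx
    have hf₀pos : 0 < f x₀ :=
      lt_of_le_of_lt hf0 (hmono ⟨le_rfl, le_of_lt hx₀gt⟩ ⟨le_of_lt hx₀gt, le_rfl⟩ hx₀gt)
    have hODE0 := hODE x₀ hx₀gt
    rw [hgx x₀ hx₀gt, hx₀0] at hODE0
    have hD : 0 < deriv (deriv f) x₀ := by nlinarith [mul_pos hρ hf₀pos]
    have hd1 : ContDiffOn ℝ 1 (deriv f) (Set.Ioi xbar) :=
      (hf.mono Set.Ioi_subset_Ici_self).deriv_of_isOpen isOpen_Ioi (by norm_num)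
    have hdiff : DifferentiableAt ℝ (deriv f) x₀ :=
      ((hd1.differentiableOn one_ne_zero) x₀ hx₀gt).differentiableAt (Ioi_mem_nhds hx₀gt)
    have hgd : HasDerivAt g (deriv (deriv f) x₀) x₀ := by
      refine hdiff.hasDerivAt.congr_of_eventuallyEq ?_
      filter_upwards [Ioi_mem_nhds hx₀gt] with x hx
      exact (hgx x hx).symm
    have hslope : Filter.Tendsto (slope g x₀) (𝓝[≠] x₀) (𝓝 (deriv (deriv f) x₀)) :=
      hasDerivAt_iff_tendsto_slope.1 hgd
    have hev : ∀ᶠ x in 𝓝[≠] x₀, 0 < slope g x₀ x :=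
      hslope.eventually (eventually_gt_nhds hD)
    have hev2 : ∀ᶠ x in 𝓝[<] x₀, 0 < slope g x₀ x :=
      hev.filter_mono (nhdsWithin_mono _ fun x hx => ne_of_lt hx)
    have hev3 : ∀ᶠ x in 𝓝[<] x₀, x ∈ Set.Ioo xbar x₀ :=
      Ioo_mem_nhdsLT_of_mem ⟨hx₀gt, le_rfl⟩
    obtain ⟨x, hsx, hxIoo⟩ := (hev2.and hev3).exists
    have hgxpos : 0 < g x := hpos x hxIoo
    have hlt : x - x₀ < 0 := sub_neg.2 hxIoo.2
    rw [slope_def_field, hx₀0, sub_zero] at hsx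
    exact absurd hsx (not_lt.2 (le_of_lt (div_neg_of_pos_of_neg hgxpos hlt)))
  constructor
  · intro x hx
    rw [hgx x hx]
    exact key x hx
  · refine strictMonoOn_of_deriv_pos (convex_Ioi xbar)
      (hfc.mono Set.Ioi_subset_Ici_self) ?_
    intro x hx
    rw [interior_Ioi] at hx
    rw [hgx x hx]
    exact key x hx
end

section
/- Let ρ > 0 and x̄ ≥ 0, and let f : [x̄,∞) → ℝ be twice continuously differentiable with (σ²/2)f''(x) + μ·f'(x) − ρ·f(x) = 0 for all x > x̄, f(x̄) ≥ 0 and f'(x̄) > 0. Then f is three times differentiable on (x̄,∞), and for every x̃ > x̄ with f''(x̃) = 0 one has f'''(x̃) > 0; consequently there exists ε > 0 such that f''(x) < 0 for x ∈ (x̃−ε, x̃) and f''(x) > 0 for x ∈ (x̃, x̃+ε). Hence at an inflection point f can only switch from concave on the left to convex on the right. -/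
open Real Set Filter

/-- under the hypotheses of STATEMENT 6, `f` is three times differentiable on
`(x̄,∞)` and at every `x̃ > x̄` with `f''(x̃)=0` one has `f'''(x̃)>0`; hence there is `ε>0`
with `f''<0` on `(x̃−ε,x̃)` and `f''>0` on `(x̃,x̃+ε)`. -/
theorem stmt7 (μ σ : ℝ) (hμ : 0 < μ) (hσ : 0 < σ)
    (ρ : ℝ) (hρ : 0 < ρ) (xbar : ℝ) (hxbar : 0 ≤ xbar)
    (f : ℝ → ℝ) (hf : ContDiffOn ℝ 2 f (Set.Ici xbar))
    (hODE : ∀ x, xbar < x → σ^2/2 * deriv (deriv f) x + μ * deriv f x - ρ * f x = 0)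
    (hf0 : 0 ≤ f xbar) (hf1 : 0 < derivWithin f (Set.Ici xbar) xbar) :
    (∀ x ∈ Set.Ioi xbar, DifferentiableAt ℝ (deriv (deriv f)) x) ∧
    (∀ xt, xbar < xt → deriv (deriv f) xt = 0 →
      0 < deriv (deriv (deriv f)) xt ∧
      ∃ ε > 0, (∀ x ∈ Set.Ioo (xt - ε) xt, deriv (deriv f) x < 0) ∧
        (∀ x ∈ Set.Ioo xt (xt + ε), 0 < deriv (deriv f) x)) := by
  have hσ2 : (0:ℝ) < σ^2 := by positivity
  have hcpos : (0:ℝ) < 2/σ^2 := by positivity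
  have hfo : ContDiffOn ℝ 2 f (Set.Ioi xbar) := hf.mono Set.Ioi_subset_Ici_self
  have hg1 : ContDiffOn ℝ 1 (deriv f) (Set.Ioi xbar) :=
    hfo.deriv_of_isOpen isOpen_Ioi (by norm_num)
  have hh0 : ContDiffOn ℝ 0 (deriv (deriv f)) (Set.Ioi xbar) :=
    hg1.deriv_of_isOpen isOpen_Ioi (by norm_num)
  have hhcont : ContinuousOn (deriv (deriv f)) (Set.Ioi xbar) := hh0.continuousOn
  have hmem : ∀ x, xbar < x → Set.Ioi xbar ∈ nhds x := fun x hx => isOpen_Ioi.mem_nhds hx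
  have hfd : ∀ x, xbar < x → DifferentiableAt ℝ f x := fun x hx =>
    (hfo.differentiableOn (by norm_num)).differentiableAt (hmem x hx)
  have hgd : ∀ x, xbar < x → DifferentiableAt ℝ (deriv f) x := fun x hx =>
    (hg1.differentiableOn (by norm_num)).differentiableAt (hmem x hx)
  have hEq : ∀ x, xbar < x →
      deriv (deriv f) x = 2/σ^2 * (ρ * f x - μ * deriv f x) := by
    intro x hx
    have h0 := hODE x hx
    have hσ2' : σ^2 ≠ 0 := ne_of_gt hσ2
    field_simp
    nlinarith [h0]
  have hhd : ∀ x, xbar < x → DifferentiableAt ℝ (deriv (deriv f)) x := by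
    intro x hx
    have hev : (fun y => 2/σ^2 * (ρ * f y - μ * deriv f y)) =ᶠ[nhds x] deriv (deriv f) := by
      filter_upwards [hmem x hx] with y hy
      exact (hEq y hy).symm
    have hGd : DifferentiableAt ℝ (fun y => 2/σ^2 * (ρ * f y - μ * deriv f y)) x :=
      (differentiableAt_const _).mul (((differentiableAt_const _).mul (hfd x hx)).sub
        ((differentiableAt_const _).mul (hgd x hx)))
    exact hGd.congr_of_eventuallyEq hev.symm
  have hderiv_h : ∀ x, xbar < x →
      deriv (deriv (deriv f)) x = 2/σ^2 * (ρ * deriv f x - μ * deriv (deriv f) x) := by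
    intro x hx
    have hev : (fun y => 2/σ^2 * (ρ * f y - μ * deriv f y)) =ᶠ[nhds x] deriv (deriv f) := by
      filter_upwards [hmem x hx] with y hy
      exact (hEq y hy).symm
    have h1 : HasDerivAt f (deriv f x) x := (hfd x hx).hasDerivAt
    have h2 : HasDerivAt (deriv f) (deriv (deriv f) x) x := (hgd x hx).hasDerivAt
    have hG : HasDerivAt (fun y => 2/σ^2 * (ρ * f y - μ * deriv f y))
        (2/σ^2 * (ρ * deriv f x - μ * deriv (deriv f) x)) x := by
      exact ((h1.const_mul ρ).sub (h2.const_mul μ)).const_mul (2/σ^2)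
    exact (hG.congr_of_eventuallyEq hev.symm).deriv
  -- boundary continuity of derivWithin
  have hgW : ContDiffOn ℝ 1 (derivWithin f (Set.Ici xbar)) (Set.Ici xbar) :=
    hf.derivWithin (uniqueDiffOn_Ici xbar) (by norm_num)
  have hgWeq : ∀ x, xbar < x → derivWithin f (Set.Ici xbar) x = deriv f x := by
    intro x hx
    exact derivWithin_of_mem_nhds (Filter.mem_of_superset (hmem x hx) Set.Ioi_subset_Ici_self)
  -- positivity of deriv f on (xbar, ∞)
  have hfpos : ∀ x, xbar < x → 0 < deriv f x := by
    by_contra hcon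
    push_neg at hcon
    obtain ⟨x0, hx0, hx0le⟩ := hcon
    have hcontW : ContinuousWithinAt (derivWithin f (Set.Ici xbar)) (Set.Ici xbar) xbar :=
      hgW.continuousOn xbar Set.self_mem_Ici
    have hpos_ev : ∀ᶠ y in nhdsWithin xbar (Set.Ici xbar),
        0 < derivWithin f (Set.Ici xbar) y :=
      hcontW.eventually (eventually_gt_nhds hf1)
    obtain ⟨u, hu, hsub⟩ := mem_nhdsGE_iff_exists_Ico_subset.1 hpos_ev
    have hu' : xbar < u := hu
    -- first zero of deriv f
    have hx0u : u ≤ x0 := by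
      by_contra hco
      push_neg at hco
      have h1 := hsub ⟨hx0.le, hco⟩
      rw [Set.mem_setOf_eq, hgWeq x0 hx0] at h1
      linarith
    have hIci_sub : Set.Ici u ⊆ Set.Ioi xbar := fun y hy => lt_of_lt_of_le hu' hy
    have hTclosed : IsClosed (Set.Ici u ∩ deriv f ⁻¹' Set.Iic 0) :=
      (hg1.continuousOn.mono hIci_sub).preimage_isClosed_of_isClosed isClosed_Ici isClosed_Iic
    have hTne : (Set.Ici u ∩ deriv f ⁻¹' Set.Iic 0).Nonempty := ⟨x0, hx0u, hx0le⟩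
    have hTbdd : BddBelow (Set.Ici u ∩ deriv f ⁻¹' Set.Iic 0) := ⟨u, fun y hy => hy.1⟩
    set xs := sInf (Set.Ici u ∩ deriv f ⁻¹' Set.Iic 0) with hxs
    have hxsT : xs ∈ Set.Ici u ∩ deriv f ⁻¹' Set.Iic 0 := hTclosed.csInf_mem hTne hTbdd
    have hxs_gt : xbar < xs := lt_of_lt_of_le hu' hxsT.1
    have hposlt : ∀ y, xbar < y → y < xs → 0 < deriv f y := by
      intro y hy1 hy2
      by_contra hyn
      push_neg at hyn
      have hyu : u ≤ y := by
        by_contra hyu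
        push_neg at hyu
        have h1 := hsub ⟨hy1.le, hyu⟩
        rw [Set.mem_setOf_eq, hgWeq y hy1] at h1
        linarith
      exact absurd (csInf_le hTbdd ⟨hyu, hyn⟩) (not_le.2 hy2)
    have hcxs : ContinuousAt (deriv f) xs :=
      hg1.continuousOn.continuousAt (hmem xs hxs_gt)
    have hge : 0 ≤ deriv f xs := by
      refine ge_of_tendsto (hcxs.continuousWithinAt :
        ContinuousWithinAt (deriv f) (Set.Iio xs) xs) ?_
      filter_upwards [Ioo_mem_nhdsLT_of_mem (⟨hxs_gt, le_refl xs⟩ : xs ∈ Set.Ioc xbar xs)]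
        with y hy
      exact (hposlt y hy.1 hy.2).le
    have hgxs : deriv f xs = 0 := le_antisymm hxsT.2 hge
    have hmonoI : StrictMonoOn f (Set.Icc xbar xs) := by
      apply strictMonoOn_of_deriv_pos (convex_Icc _ _)
        (hf.continuousOn.mono Set.Icc_subset_Ici_self)
      intro y hy
      rw [interior_Icc] at hy
      exact hposlt y hy.1 hy.2
    have hfxs : 0 < f xs :=
      lt_of_le_of_lt hf0 (hmonoI ⟨le_rfl, hxs_gt.le⟩ ⟨hxs_gt.le, le_rfl⟩ hxs_gt)
    have hhxs : 0 < deriv (deriv f) xs := by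
      rw [hEq xs hxs_gt, hgxs]
      have h1 : 0 < ρ * f xs - μ * 0 := by nlinarith
      exact mul_pos hcpos h1
    have hhc : ContinuousAt (deriv (deriv f)) xs := hhcont.continuousAt (hmem xs hxs_gt)
    have hev2 : ∀ᶠ y in nhds xs, 0 < deriv (deriv f) y :=
      hhc.eventually (eventually_gt_nhds hhxs)
    obtain ⟨δ, hδ, hball⟩ := Metric.eventually_nhds_iff_ball.1 hev2
    set a := max ((xbar+xs)/2) (xs - δ/2) with ha
    have haxbar : xbar < a := lt_of_lt_of_le (by linarith) (le_max_left _ _)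
    have haxs : a < xs := max_lt (by linarith) (by linarith)
    have hax : xs - δ/2 ≤ a := le_max_right _ _
    have hmono2 : StrictMonoOn (deriv f) (Set.Icc a xs) := by
      apply strictMonoOn_of_deriv_pos (convex_Icc _ _)
        (hg1.continuousOn.mono (fun y hy => lt_of_lt_of_le haxbar hy.1))
      intro y hy
      rw [interior_Icc] at hy
      apply hball
      rw [Metric.mem_ball, Real.dist_eq, abs_lt]
      constructor
      · linarith [hy.1, hy.2]
      · linarith [hy.2]
    have hlt : deriv f a < deriv f xs :=
      hmono2 ⟨le_rfl, haxs.le⟩ ⟨haxs.le, le_rfl⟩ haxs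
    rw [hgxs] at hlt
    linarith [hposlt a haxbar haxs]
  -- conclusion
  refine ⟨fun x hx => hhd x hx, ?_⟩
  intro xt hxt hxt0
  have h3 : deriv (deriv (deriv f)) xt = 2/σ^2 * (ρ * deriv f xt - μ * deriv (deriv f) xt) :=
    hderiv_h xt hxt
  have h3pos : 0 < deriv (deriv (deriv f)) xt := by
    rw [h3, hxt0]
    have h1 := hfpos xt hxt
    have h2 : 0 < ρ * deriv f xt - μ * 0 := by nlinarith
    exact mul_pos hcpos h2
  refine ⟨h3pos, ?_⟩
  have hQcont : ContinuousOn (fun y => 2/σ^2 * (ρ * deriv f y - μ * deriv (deriv f) y))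
      (Set.Ioi xbar) :=
    continuousOn_const.mul ((continuousOn_const.mul hg1.continuousOn).sub
      (continuousOn_const.mul hhcont))
  have hQxt : ContinuousAt (fun y => 2/σ^2 * (ρ * deriv f y - μ * deriv (deriv f) y)) xt :=
    hQcont.continuousAt (hmem xt hxt)
  have hQpos : 0 < 2/σ^2 * (ρ * deriv f xt - μ * deriv (deriv f) xt) := h3 ▸ h3pos
  have hev3 : ∀ᶠ y in nhds xt, 0 < 2/σ^2 * (ρ * deriv f y - μ * deriv (deriv f) y) :=
    hQxt.eventually (eventually_gt_nhds hQpos)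
  obtain ⟨δ, hδpos, hball⟩ := Metric.eventually_nhds_iff_ball.1 hev3
  have hεδ : min (δ/2) ((xt - xbar)/2) ≤ δ/2 := min_le_left _ _
  have hεx : min (δ/2) ((xt - xbar)/2) ≤ (xt - xbar)/2 := min_le_right _ _
  have hεpos : 0 < min (δ/2) ((xt - xbar)/2) := lt_min (by linarith) (by linarith)
  have hlow : xbar < xt - min (δ/2) ((xt - xbar)/2) := by linarith
  have hmono3 : StrictMonoOn (deriv (deriv f))
      (Set.Icc (xt - min (δ/2) ((xt - xbar)/2)) (xt + min (δ/2) ((xt - xbar)/2))) := by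
    apply strictMonoOn_of_deriv_pos (convex_Icc _ _)
      (hhcont.mono (fun y hy => lt_of_lt_of_le hlow hy.1))
    intro y hy
    rw [interior_Icc] at hy
    have hyb : xbar < y := lt_trans hlow hy.1
    rw [hderiv_h y hyb]
    apply hball
    rw [Metric.mem_ball, Real.dist_eq, abs_lt]
    constructor
    · linarith [hy.1]
    · linarith [hy.2]
  refine ⟨min (δ/2) ((xt - xbar)/2), hεpos, ?_, ?_⟩
  · intro x hx
    have hlt : deriv (deriv f) x < deriv (deriv f) xt :=
      hmono3 ⟨hx.1.le, by linarith [hx.2]⟩ ⟨by linarith, by linarith⟩ hx.2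
    rwa [hxt0] at hlt
  · intro x hx
    have hlt : deriv (deriv f) xt < deriv (deriv f) x :=
      hmono3 ⟨by linarith, by linarith⟩ ⟨by linarith [hx.1], hx.2.le⟩ hx.1
    rwa [hxt0] at hlt
end

section
/- There exists a unique y_l ∈ (0, y_u) with f(y_l) = 0, and this y_l satisfies y_l ∈ (b*_{r+q}, y_u). Moreover K₁(y)·δ'(b*_{r+q}) > 1 for all y ∈ (b*_{r+q}, y_l) and K₁(y)·δ'(b*_{r+q}) < 1 for all y ∈ (y_l, y_u]. -/
open Real Set Filter

namespace S9
noncomputable section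

def U1 (b g1 g2 y : ℝ) : ℝ := (g1 - b) * Real.exp (g1 * y) + (b - g2) * Real.exp (g2 * y)
def DU1 (b g1 g2 y : ℝ) : ℝ := (g1 - b) * g1 * Real.exp (g1 * y) + (b - g2) * g2 * Real.exp (g2 * y)
def U2 (c g1 g2 y : ℝ) : ℝ := (g1 + c) * Real.exp (g1 * y) + (-c - g2) * Real.exp (g2 * y)
def DU2 (c g1 g2 y : ℝ) : ℝ := (g1 + c) * g1 * Real.exp (g1 * y) + (-c - g2) * g2 * Real.exp (g2 * y)
def ell (b c g1 g2 y : ℝ) : ℝ :=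
  b/(b+c) * Real.log (U1 b g1 g2 y) + c/(b+c) * Real.log (U2 c g1 g2 y)
def lCC (b c : ℝ) : ℝ := (b-c)/(b+c) * (Real.log c - Real.log b)
def GG (b c g1 g2 y : ℝ) : ℝ := Real.exp (lCC b c + ell b c g1 g2 y)
def hh (b c g1 g2 y : ℝ) : ℝ :=
  b/(b+c) * (DU1 b g1 g2 y / U1 b g1 g2 y) + c/(b+c) * (DU2 c g1 g2 y / U2 c g1 g2 y)
def DP (g1 g2 y : ℝ) : ℝ := g1 * Real.exp (g1*y) - g2 * Real.exp (g2*y)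
def bst (g1 g2 : ℝ) : ℝ := Real.log (g2^2/g1^2) / (g1 - g2)

variable {b c g1 g2 Q : ℝ}

/-- hypothesis bundle -/
structure Hyp (b c g1 g2 Q : ℝ) : Prop where
  hb : 0 < b
  hbc : b < c
  hg1 : b < g1
  hsum : g1 + g2 = b - c
  hprod : g1 * g2 = -(Q + b*c)
  hQ : 0 < Q

namespace Hyp
variable (H : Hyp b c g1 g2 Q)
include H

lemma hc : 0 < c := H.hb.trans H.hbc
lemma hg1pos : 0 < g1 := H.hb.trans H.hg1
lemma hg2 : g2 < -c := by have := H.hsum; have := H.hg1; linarith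
lemma hg2neg : g2 < 0 := H.hg2.trans (by linarith [H.hc])
lemma hg21 : g2 < g1 := H.hg2neg.trans H.hg1pos
lemma hbcs : 0 < b + c := by linarith [H.hb, H.hc]

lemma U1_pos (y : ℝ) : 0 < U1 b g1 g2 y :=
  add_pos (mul_pos (by linarith [H.hg1]) (exp_pos _)) (mul_pos (by linarith [H.hg2neg, H.hb]) (exp_pos _))

lemma U2_pos (y : ℝ) : 0 < U2 c g1 g2 y :=
  add_pos (mul_pos (by linarith [H.hg1pos, H.hc]) (exp_pos _)) (mul_pos (by linarith [H.hg2]) (exp_pos _))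

end Hyp

/-- cross-multiplied monotonicity of u'/u -/
lemma cross {A B g1 g2 : ℝ} (hA : 0 < A) (hB : 0 < B) (hg : g2 < g1) {y1 y2 : ℝ} (hy : y1 < y2) :
    (A*g1*Real.exp (g1*y1) + B*g2*Real.exp (g2*y1)) * (A*Real.exp (g1*y2) + B*Real.exp (g2*y2)) <
    (A*g1*Real.exp (g1*y2) + B*g2*Real.exp (g2*y2)) * (A*Real.exp (g1*y1) + B*Real.exp (g2*y1)) := by
  have key : Real.exp (g1*y1) * Real.exp (g2*y2) < Real.exp (g1*y2) * Real.exp (g2*y1) := by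
    rw [← Real.exp_add, ← Real.exp_add]
    apply Real.exp_lt_exp.2
    nlinarith
  nlinarith [mul_lt_mul_of_pos_left key (mul_pos (mul_pos hA hB) (sub_pos.2 hg))]

namespace Hyp
variable (H : Hyp b c g1 g2 Q)
include H

lemma ratio1_mono {y1 y2 : ℝ} (hy : y1 < y2) :
    DU1 b g1 g2 y1 / U1 b g1 g2 y1 < DU1 b g1 g2 y2 / U1 b g1 g2 y2 := by
  rw [div_lt_div_iff₀ (H.U1_pos y1) (H.U1_pos y2)]
  have := cross (A := g1 - b) (B := b - g2) (by linarith [H.hg1]) (by linarith [H.hg2neg, H.hb]) H.hg21 hy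
  simpa [DU1, U1, mul_comm, mul_assoc, mul_left_comm] using this

lemma ratio2_mono {y1 y2 : ℝ} (hy : y1 < y2) :
    DU2 c g1 g2 y1 / U2 c g1 g2 y1 < DU2 c g1 g2 y2 / U2 c g1 g2 y2 := by
  rw [div_lt_div_iff₀ (H.U2_pos y1) (H.U2_pos y2)]
  have := cross (A := g1 + c) (B := -c - g2) (by linarith [H.hg1pos, H.hc]) (by linarith [H.hg2]) H.hg21 hy
  simpa [DU2, U2, mul_comm, mul_assoc, mul_left_comm] using this

lemma hh_mono {y1 y2 : ℝ} (hy : y1 < y2) : hh b c g1 g2 y1 < hh b c g1 g2 y2 := by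
  have h1 := H.ratio1_mono hy
  have h2 := H.ratio2_mono hy
  have hp : 0 < b/(b+c) := div_pos H.hb H.hbcs
  have hp2 : 0 < c/(b+c) := div_pos H.hc H.hbcs
  unfold hh
  have := mul_lt_mul_of_pos_left h1 hp
  have := mul_lt_mul_of_pos_left h2 hp2
  linarith

lemma ratio1_zero : DU1 b g1 g2 0 / U1 b g1 g2 0 = -c := by
  have h0 : U1 b g1 g2 0 = g1 - g2 := by simp [U1]
  have h1 : DU1 b g1 g2 0 = -c * (g1 - g2) := by
    simp [DU1]
    linear_combination (g1 - g2) * H.hsum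
  rw [h0, h1]
  field_simp [show g1 - g2 ≠ 0 by linarith [H.hg21]]

lemma ratio2_zero : DU2 c g1 g2 0 / U2 c g1 g2 0 = b := by
  have h0 : U2 c g1 g2 0 = g1 - g2 := by simp [U2]; ring
  have h1 : DU2 c g1 g2 0 = b * (g1 - g2) := by
    simp [DU2]
    linear_combination (g1 - g2) * H.hsum
  rw [h0, h1]
  field_simp [show g1 - g2 ≠ 0 by linarith [H.hg21]]

lemma hh_zero : hh b c g1 g2 0 = 0 := by
  unfold hh
  rw [H.ratio1_zero, H.ratio2_zero]
  ring

lemma hh_pos {y : ℝ} (hy : 0 < y) : 0 < hh b c g1 g2 y := by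
  have := H.hh_mono hy
  rw [H.hh_zero] at this
  exact this

end Hyp

lemma hasDerivAt_U1 (b g1 g2 y : ℝ) : HasDerivAt (fun t => U1 b g1 g2 t) (DU1 b g1 g2 y) y := by
  have h1 : HasDerivAt (fun t : ℝ => Real.exp (g1 * t)) (g1 * Real.exp (g1 * y)) y := by
    simpa [mul_comm] using ((hasDerivAt_id y).const_mul g1).exp
  have h2 : HasDerivAt (fun t : ℝ => Real.exp (g2 * t)) (g2 * Real.exp (g2 * y)) y := by
    simpa [mul_comm] using ((hasDerivAt_id y).const_mul g2).exp
  have := (h1.const_mul (g1 - b)).add (h2.const_mul (b - g2))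
  simpa [U1, DU1, mul_comm, mul_assoc, mul_left_comm, Pi.add_def] using this

lemma hasDerivAt_U2 (c g1 g2 y : ℝ) : HasDerivAt (fun t => U2 c g1 g2 t) (DU2 c g1 g2 y) y := by
  have h1 : HasDerivAt (fun t : ℝ => Real.exp (g1 * t)) (g1 * Real.exp (g1 * y)) y := by
    simpa [mul_comm] using ((hasDerivAt_id y).const_mul g1).exp
  have h2 : HasDerivAt (fun t : ℝ => Real.exp (g2 * t)) (g2 * Real.exp (g2 * y)) y := by
    simpa [mul_comm] using ((hasDerivAt_id y).const_mul g2).exp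
  have := (h1.const_mul (g1 + c)).add (h2.const_mul (-c - g2))
  simpa [U2, DU2, mul_comm, mul_assoc, mul_left_comm, Pi.add_def] using this

namespace Hyp
variable (H : Hyp b c g1 g2 Q)
include H

lemma hasDerivAt_ell (y : ℝ) :
    HasDerivAt (fun t => ell b c g1 g2 t) (hh b c g1 g2 y) y := by
  have h1 := ((hasDerivAt_U1 b g1 g2 y).log (ne_of_gt (H.U1_pos y))).const_mul (b/(b+c))
  have h2 := ((hasDerivAt_U2 c g1 g2 y).log (ne_of_gt (H.U2_pos y))).const_mul (c/(b+c))
  simpa [ell, hh, Pi.add_def] using h1.add h2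

lemma ell_strictMono : StrictMonoOn (fun t => ell b c g1 g2 t) (Set.Ici 0) := by
  apply strictMonoOn_of_deriv_pos (convex_Ici 0)
  · exact fun x _ => (H.hasDerivAt_ell x).continuousAt.continuousWithinAt
  · intro x hx
    rw [interior_Ici] at hx
    rw [(H.hasDerivAt_ell x).deriv]
    exact H.hh_pos hx

lemma ell_tangent {a y : ℝ} (hy : a < y) :
    ell b c g1 g2 a + hh b c g1 g2 a * (y - a) < ell b c g1 g2 y := by
  set M : ℝ → ℝ := fun t => ell b c g1 g2 t - hh b c g1 g2 a * t with hM
  have hMd : ∀ t, HasDerivAt M (hh b c g1 g2 t - hh b c g1 g2 a) t := by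
    intro t
    exact (H.hasDerivAt_ell t).sub ((hasDerivAt_id t).const_mul _ |>.congr_deriv (by ring))
  have hmono : StrictMonoOn M (Set.Ici a) := by
    apply strictMonoOn_of_deriv_pos (convex_Ici a)
    · exact fun x _ => (hMd x).continuousAt.continuousWithinAt
    · intro x hx
      rw [interior_Ici] at hx
      rw [(hMd x).deriv]
      linarith [H.hh_mono hx]
  have := hmono (Set.self_mem_Ici) (Set.mem_Ici.2 (le_of_lt hy)) hy
  simp only [hM] at this
  linarith

lemma hR : 1 < g2^2/g1^2 := by
  have h1 : 0 < g1^2 := pow_pos H.hg1pos 2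
  rw [lt_div_iff₀ h1]
  have h2 : g1 < -g2 := by have := H.hsum; have := H.hbc; nlinarith [H.hg1pos, H.hg2neg]
  nlinarith [H.hg1pos]

lemma bst_pos : 0 < bst g1 g2 :=
  div_pos (Real.log_pos H.hR) (by linarith [H.hg21])

lemma exp_g1_bst : Real.exp (g1 * bst g1 g2) = (g2^2/g1^2) * Real.exp (g2 * bst g1 g2) := by
  have hne : g1 - g2 ≠ 0 := by linarith [H.hg21]
  have : g1 * bst g1 g2 = Real.log (g2^2/g1^2) + g2 * bst g1 g2 := by
    unfold bst; field_simp; ring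
  have hg2ne : g2 ≠ 0 := ne_of_lt H.hg2neg
  have hg1ne : g1 ≠ 0 := ne_of_gt H.hg1pos
  rw [this, Real.exp_add, Real.exp_log (by positivity : (0:ℝ) < g2^2/g1^2)]

lemma U1_bst : U1 b g1 g2 (bst g1 g2) =
    Real.exp (g2 * bst g1 g2) * ((g1 - g2) * (Q + b^2) / g1^2) := by
  have hg1ne : g1 ≠ 0 := ne_of_gt H.hg1pos
  unfold U1
  rw [H.exp_g1_bst]
  field_simp
  linear_combination ((b*(g1-g2)) * H.hsum - (g1-g2) * H.hprod)

lemma U2_bst : U2 c g1 g2 (bst g1 g2) =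
    Real.exp (g2 * bst g1 g2) * ((g1 - g2) * (Q + c^2) / g1^2) := by
  have hg1ne : g1 ≠ 0 := ne_of_gt H.hg1pos
  unfold U2
  rw [H.exp_g1_bst]
  field_simp
  linear_combination ((-c*(g1-g2)) * H.hsum - (g1-g2) * H.hprod)

lemma DP_bst : DP g1 g2 (bst g1 g2) =
    Real.exp (g2 * bst g1 g2) * ((g1 - g2) * (Q + b*c) / g1^2) := by
  have hg1ne : g1 ≠ 0 := ne_of_gt H.hg1pos
  unfold DP
  rw [H.exp_g1_bst]
  field_simp
  linear_combination (- (g1-g2) * H.hprod)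

lemma DU1_bst : DU1 b g1 g2 (bst g1 g2) =
    Real.exp (g2 * bst g1 g2) * (-(Q + b*c) * b * (g1 - g2) / g1^2) := by
  have hg1ne : g1 ≠ 0 := ne_of_gt H.hg1pos
  unfold DU1
  rw [H.exp_g1_bst]
  field_simp
  linear_combination ((b*(g1-g2)) * H.hprod)

lemma DU2_bst : DU2 c g1 g2 (bst g1 g2) =
    Real.exp (g2 * bst g1 g2) * ((Q + b*c) * c * (g1 - g2) / g1^2) := by
  have hg1ne : g1 ≠ 0 := ne_of_gt H.hg1pos
  unfold DU2
  rw [H.exp_g1_bst]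
  field_simp
  linear_combination ((-c*(g1-g2)) * H.hprod)

lemma hQb2 : 0 < Q + b^2 := add_pos_of_pos_of_nonneg H.hQ (sq_nonneg b)
lemma hQc2 : 0 < Q + c^2 := add_pos_of_pos_of_nonneg H.hQ (sq_nonneg c)
lemma hQbc : 0 < Q + b*c := add_pos H.hQ (mul_pos H.hb H.hc)
lemma hg1g2 : 0 < g1 - g2 := by linarith [H.hg21]

lemma DP_bst_pos : 0 < DP g1 g2 (bst g1 g2) := by
  rw [H.DP_bst]
  exact mul_pos (exp_pos _) (div_pos (mul_pos H.hg1g2 H.hQbc) (pow_pos H.hg1pos 2))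

lemma hh_bst : hh b c g1 g2 (bst g1 g2) =
    (Q + b*c) * Q * (c - b) / ((Q + b^2) * (Q + c^2)) := by
  have hg1ne : g1 ≠ 0 := ne_of_gt H.hg1pos
  have hE : Real.exp (g2 * bst g1 g2) ≠ 0 := ne_of_gt (exp_pos _)
  have hne1 : (Q + b^2) ≠ 0 := ne_of_gt H.hQb2
  have hne2 : (Q + c^2) ≠ 0 := ne_of_gt H.hQc2
  have hgg : g1 - g2 ≠ 0 := ne_of_gt H.hg1g2
  have h1 : DU1 b g1 g2 (bst g1 g2) / U1 b g1 g2 (bst g1 g2) = -(Q + b*c) * b / (Q + b^2) := by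
    rw [H.DU1_bst, H.U1_bst, mul_div_mul_left _ _ hE]
    field_simp
  have h2 : DU2 c g1 g2 (bst g1 g2) / U2 c g1 g2 (bst g1 g2) = (Q + b*c) * c / (Q + c^2) := by
    rw [H.DU2_bst, H.U2_bst, mul_div_mul_left _ _ hE]
    field_simp
  unfold hh
  rw [h1, h2]
  have hbcne : b + c ≠ 0 := ne_of_gt H.hbcs
  field_simp
  ring

end Hyp

section Calc1
variable {b c Q : ℝ}

/-- F(t) = log(t+bc) − p log(t+b²) − (1−p) log(t+c²) -/
def Ff (b c t : ℝ) : ℝ :=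
  Real.log (t + b*c) - (b/(b+c) * Real.log (t + b^2) + c/(b+c) * Real.log (t + c^2))

def FD (b c t : ℝ) : ℝ := 1/(t+b*c) - (b/(b+c)/(t+b^2) + c/(b+c)/(t+c^2))

def Psi (b c t : ℝ) : ℝ := t^2*(c-b)^2 / (b*c*(t+b^2)*(t+c^2))

variable (hb : 0 < b) (hbc : b < c) (hQ : 0 < Q)
include hb hbc

lemma hasDerivAt_Ff {t : ℝ} (ht : 0 ≤ t) : HasDerivAt (Ff b c) (FD b c t) t := by
  have hc : 0 < c := hb.trans hbc
  have h0 : 0 < t + b*c := by nlinarith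
  have h1 : 0 < t + b^2 := by nlinarith
  have h2 : 0 < t + c^2 := by nlinarith
  have d0 : HasDerivAt (fun t : ℝ => t + b*c) 1 t := by
    simpa using (hasDerivAt_id t).add_const (b*c)
  have d1 : HasDerivAt (fun t : ℝ => t + b^2) 1 t := by
    simpa using (hasDerivAt_id t).add_const (b^2)
  have d2 : HasDerivAt (fun t : ℝ => t + c^2) 1 t := by
    simpa using (hasDerivAt_id t).add_const (c^2)
  have l0 := d0.log (ne_of_gt h0)
  have l1 := (d1.log (ne_of_gt h1)).const_mul (b/(b+c))
  have l2 := (d2.log (ne_of_gt h2)).const_mul (c/(b+c))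
  have := l0.sub (l1.add l2)
  rw [show Ff b c = fun i => Ff b c i from rfl]
  simpa [Ff, FD, div_eq_mul_inv, mul_comm, Pi.add_def, Pi.sub_def] using this

lemma FD_pos {t : ℝ} (ht : 0 < t) : 0 < FD b c t := by
  have hc : 0 < c := hb.trans hbc
  have h0 : 0 < t + b*c := by nlinarith
  have h1 : 0 < t + b^2 := by nlinarith
  have h2 : 0 < t + c^2 := by nlinarith
  have hbcs : 0 < b + c := by linarith
  have key : FD b c t = t*(c-b)^2/((t+b*c)*((t+b^2)*(t+c^2))) := by
    unfold FD
    field_simp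
    ring
  rw [key]
  have hcb : 0 < (c-b)^2 := pow_pos (by linarith) 2
  exact div_pos (mul_pos ht hcb) (mul_pos h0 (mul_pos h1 h2))

include hQ

lemma Ff_lt : Ff b c 0 < Ff b c Q := by
  have : StrictMonoOn (Ff b c) (Set.Icc 0 Q) := by
    apply strictMonoOn_of_deriv_pos (convex_Icc 0 Q)
    · exact fun x hx => (hasDerivAt_Ff hb hbc hx.1).continuousAt.continuousWithinAt
    · intro x hx
      rw [interior_Icc] at hx
      rw [(hasDerivAt_Ff hb hbc (le_of_lt hx.1)).deriv]
      exact FD_pos hb hbc hx.1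
  exact this (Set.left_mem_Icc.2 (le_of_lt hQ)) (Set.right_mem_Icc.2 (le_of_lt hQ)) hQ

omit hQ

lemma hasDerivAt_Psi {t : ℝ} (ht : 0 ≤ t) :
    HasDerivAt (Psi b c)
      ((2*t*(c-b)^2 * (b*c*(t+b^2)*(t+c^2)) - t^2*(c-b)^2 * (b*c*((t+c^2)+(t+b^2)))) /
        (b*c*(t+b^2)*(t+c^2))^2) t := by
  have hc : 0 < c := hb.trans hbc
  have h1 : 0 < t + b^2 := by nlinarith
  have h2 : 0 < t + c^2 := by nlinarith
  have dnum : HasDerivAt (fun t : ℝ => t^2*(c-b)^2) (2*t*(c-b)^2) t := by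
    have := ((hasDerivAt_pow 2 t).mul_const ((c-b)^2))
    simpa [mul_comm, mul_assoc] using this
  have dden : HasDerivAt (fun t : ℝ => b*c*(t+b^2)*(t+c^2)) (b*c*((t+c^2)+(t+b^2))) t := by
    have d1 : HasDerivAt (fun t : ℝ => t + b^2) 1 t := by
      simpa using (hasDerivAt_id t).add_const (b^2)
    have d2 : HasDerivAt (fun t : ℝ => t + c^2) 1 t := by
      simpa using (hasDerivAt_id t).add_const (c^2)
    have := ((d1.const_mul (b*c)).mul d2)
    exact this.congr_deriv (by ring)
  have hden : b*c*(t+b^2)*(t+c^2) ≠ 0 := by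
    have : 0 < b*c*(t+b^2)*(t+c^2) := by positivity
    exact ne_of_gt this
  unfold Psi
  exact dnum.div dden hden

lemma PsiD_gt_FD {t : ℝ} (ht : 0 < t) :
    FD b c t < (2*t*(c-b)^2 * (b*c*(t+b^2)*(t+c^2)) - t^2*(c-b)^2 * (b*c*((t+c^2)+(t+b^2)))) /
        (b*c*(t+b^2)*(t+c^2))^2 := by
  have hc : 0 < c := hb.trans hbc
  have h0 : 0 < t + b*c := by nlinarith
  have h1 : 0 < t + b^2 := by nlinarith
  have h2 : 0 < t + c^2 := by nlinarith
  have hcb : 0 < (c-b)^2 := pow_pos (by linarith) 2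
  have keyF : FD b c t = t*(c-b)^2/((t+b*c)*((t+b^2)*(t+c^2))) := by
    have hbcs : 0 < b + c := by linarith
    unfold FD; field_simp; ring
  have keyP : (2*t*(c-b)^2 * (b*c*(t+b^2)*(t+c^2)) - t^2*(c-b)^2 * (b*c*((t+c^2)+(t+b^2)))) /
        (b*c*(t+b^2)*(t+c^2))^2
      = t*(c-b)^2*((b^2+c^2)*t + 2*b^2*c^2) / (b*c*((t+b^2)^2*(t+c^2)^2)) := by
    field_simp
    ring
  rw [keyF, keyP]
  rw [div_lt_div_iff₀ (by positivity) (by positivity)]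
  have core : b*c*((t+b^2)*(t+c^2)) < ((b^2+c^2)*t + 2*b^2*c^2)*(t+b*c) := by
    have h3 : 0 < b^2+c^2-b*c := by nlinarith
    nlinarith [mul_pos (mul_pos h3 ht) ht, mul_pos (mul_pos (mul_pos hb hb) (mul_pos hc hc)) ht,
      mul_pos (mul_pos (mul_pos hb hb) hb) (mul_pos (mul_pos hc hc) hc)]
  have hpos : 0 < t*(c-b)^2*((t+b^2)*(t+c^2)) := by positivity
  calc t*(c-b)^2 * (b*c*((t+b^2)^2*(t+c^2)^2))
      = (t*(c-b)^2*((t+b^2)*(t+c^2))) * (b*c*((t+b^2)*(t+c^2))) := by ring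
    _ < (t*(c-b)^2*((t+b^2)*(t+c^2))) * (((b^2+c^2)*t + 2*b^2*c^2)*(t+b*c)) :=
        mul_lt_mul_of_pos_left core hpos
    _ = t*(c-b)^2*((b^2+c^2)*t + 2*b^2*c^2) * ((t+b*c)*((t+b^2)*(t+c^2))) := by ring

include hQ

lemma Ff_lt_Psi : Ff b c Q - Ff b c 0 < Psi b c Q := by
  have hmono : StrictMonoOn (fun t => Psi b c t - Ff b c t) (Set.Icc 0 Q) := by
    apply strictMonoOn_of_deriv_pos (convex_Icc 0 Q)
    · intro x hx
      exact ((hasDerivAt_Psi hb hbc hx.1).sub (hasDerivAt_Ff hb hbc hx.1)).continuousAt.continuousWithinAt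
    · intro x hx
      rw [interior_Icc] at hx
      rw [show (fun t => Psi b c t - Ff b c t) = Psi b c - Ff b c from rfl, ((hasDerivAt_Psi hb hbc (le_of_lt hx.1)).sub (hasDerivAt_Ff hb hbc (le_of_lt hx.1))).deriv]
      have := PsiD_gt_FD hb hbc hx.1
      linarith
  have h0 : Psi b c 0 = 0 := by simp [Psi]
  have := hmono (Set.left_mem_Icc.2 (le_of_lt hQ)) (Set.right_mem_Icc.2 (le_of_lt hQ)) hQ
  simp only [h0] at this
  linarith

end Calc1

namespace Hyp
variable {b c g1 g2 Q : ℝ} (H : Hyp b c g1 g2 Q)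
include H

lemma Ff_zero : Ff b c 0 = lCC b c := by
  have hb := H.hb; have hc := H.hc; have hbcs := H.hbcs
  have hbne : b ≠ 0 := ne_of_gt hb
  have hcne : c ≠ 0 := ne_of_gt hc
  unfold Ff lCC
  rw [zero_add, zero_add, zero_add, Real.log_mul hbne hcne, Real.log_pow, Real.log_pow]
  field_simp
  ring

lemma log_U1_bst : Real.log (U1 b g1 g2 (bst g1 g2)) =
    g2 * bst g1 g2 + Real.log ((g1-g2)/g1^2) + Real.log (Q + b^2) := by
  have h1 : (g1-g2)*(Q+b^2)/g1^2 = ((g1-g2)/g1^2) * (Q+b^2) := by ring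
  have hK : (0:ℝ) < (g1-g2)/g1^2 := div_pos H.hg1g2 (pow_pos H.hg1pos 2)
  rw [H.U1_bst, h1, Real.log_mul (ne_of_gt (exp_pos _)) (ne_of_gt (mul_pos hK H.hQb2)),
    Real.log_exp, Real.log_mul (ne_of_gt hK) (ne_of_gt H.hQb2), add_assoc]

lemma log_U2_bst : Real.log (U2 c g1 g2 (bst g1 g2)) =
    g2 * bst g1 g2 + Real.log ((g1-g2)/g1^2) + Real.log (Q + c^2) := by
  have h1 : (g1-g2)*(Q+c^2)/g1^2 = ((g1-g2)/g1^2) * (Q+c^2) := by ring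
  have hK : (0:ℝ) < (g1-g2)/g1^2 := div_pos H.hg1g2 (pow_pos H.hg1pos 2)
  rw [H.U2_bst, h1, Real.log_mul (ne_of_gt (exp_pos _)) (ne_of_gt (mul_pos hK H.hQc2)),
    Real.log_exp, Real.log_mul (ne_of_gt hK) (ne_of_gt H.hQc2), add_assoc]

lemma log_DP_bst : Real.log (DP g1 g2 (bst g1 g2)) =
    g2 * bst g1 g2 + Real.log ((g1-g2)/g1^2) + Real.log (Q + b*c) := by
  have h1 : (g1-g2)*(Q+b*c)/g1^2 = ((g1-g2)/g1^2) * (Q+b*c) := by ring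
  have hK : (0:ℝ) < (g1-g2)/g1^2 := div_pos H.hg1g2 (pow_pos H.hg1pos 2)
  rw [H.DP_bst, h1, Real.log_mul (ne_of_gt (exp_pos _)) (ne_of_gt (mul_pos hK H.hQbc)),
    Real.log_exp, Real.log_mul (ne_of_gt hK) (ne_of_gt H.hQbc), add_assoc]

lemma key_identity : Real.log (DP g1 g2 (bst g1 g2)) - (lCC b c + ell b c g1 g2 (bst g1 g2)) =
    Ff b c Q - Ff b c 0 := by
  have hbcne : b + c ≠ 0 := ne_of_gt H.hbcs
  rw [H.log_DP_bst]
  unfold ell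
  rw [H.log_U1_bst, H.log_U2_bst, H.Ff_zero]
  unfold Ff
  field_simp
  ring

lemma GG_bst_lt : GG b c g1 g2 (bst g1 g2) < DP g1 g2 (bst g1 g2) := by
  have h1 := H.key_identity
  have h2 := Ff_lt H.hb H.hbc H.hQ
  have : lCC b c + ell b c g1 g2 (bst g1 g2) < Real.log (DP g1 g2 (bst g1 g2)) := by linarith
  have := Real.exp_lt_exp.2 this
  rwa [Real.exp_log H.DP_bst_pos] at this

/-- the distance yu − bst -/
lemma GG_yu_gt :
    DP g1 g2 (bst g1 g2) < GG b c g1 g2 (bst g1 g2 + (c-b)*Q/(b*c*(Q+b*c))) := by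
  have hb := H.hb; have hc := H.hc
  have hd : 0 < (c-b)*Q/(b*c*(Q+b*c)) :=
    div_pos (mul_pos (by linarith [H.hbc]) H.hQ) (mul_pos (mul_pos hb hc) H.hQbc)
  have htang := H.ell_tangent (a := bst g1 g2) (y := bst g1 g2 + (c-b)*Q/(b*c*(Q+b*c))) (by linarith)
  have hhsimp : hh b c g1 g2 (bst g1 g2) * (bst g1 g2 + (c-b)*Q/(b*c*(Q+b*c)) - bst g1 g2)
      = Psi b c Q := by
    rw [H.hh_bst]
    unfold Psi
    have h1 : (Q+b^2) ≠ 0 := ne_of_gt H.hQb2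
    have h2 : (Q+c^2) ≠ 0 := ne_of_gt H.hQc2
    have h3 : (Q+b*c) ≠ 0 := ne_of_gt H.hQbc
    field_simp
    ring
  rw [hhsimp] at htang
  have h1 := H.key_identity
  have h2 := Ff_lt_Psi H.hb H.hbc H.hQ
  have : Real.log (DP g1 g2 (bst g1 g2)) <
      lCC b c + ell b c g1 g2 (bst g1 g2 + (c-b)*Q/(b*c*(Q+b*c))) := by linarith
  have := Real.exp_lt_exp.2 this
  rwa [Real.exp_log H.DP_bst_pos] at this

omit H in
lemma GG_pos (y : ℝ) : 0 < GG b c g1 g2 y := exp_pos _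

include H in
lemma log_A (y : ℝ) : Real.log (c^2 * U1 b g1 g2 y / (b^2 * U2 c g1 g2 y)) =
    2 * Real.log c + Real.log (U1 b g1 g2 y) - (2 * Real.log b + Real.log (U2 c g1 g2 y)) := by
  have hbne : b ≠ 0 := ne_of_gt H.hb
  have hcne : c ≠ 0 := ne_of_gt H.hc
  have h1 : c^2 * U1 b g1 g2 y ≠ 0 := ne_of_gt (mul_pos (pow_pos H.hc 2) (H.U1_pos y))
  have h2 : b^2 * U2 c g1 g2 y ≠ 0 := ne_of_gt (mul_pos (pow_pos H.hb 2) (H.U2_pos y))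
  rw [Real.log_div h1 h2, Real.log_mul (pow_ne_zero 2 hcne) (ne_of_gt (H.U1_pos y)),
    Real.log_mul (pow_ne_zero 2 hbne) (ne_of_gt (H.U2_pos y)), Real.log_pow, Real.log_pow]
  push_cast
  ring

include H in
lemma A_pos (y : ℝ) : 0 < c^2 * U1 b g1 g2 y / (b^2 * U2 c g1 g2 y) := by
  have h1 := H.U1_pos y
  have h2 := H.U2_pos y
  have hb := H.hb
  have hc := H.hc
  positivity

include H in
lemma fF_core (y : ℝ) :
    (b/c * U2 c g1 g2 y) *
      ((c^2/b^2) * (U1 b g1 g2 y / U2 c g1 g2 y)) ^ (b/(b+c)) = GG b c g1 g2 y := by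
  have hApos : 0 < (c^2/b^2) * (U1 b g1 g2 y / U2 c g1 g2 y) := by
    have h1 := H.U1_pos y
    have h2 := H.U2_pos y
    have hb := H.hb
    have hc := H.hc
    positivity
  have hAeq : (c^2/b^2) * (U1 b g1 g2 y / U2 c g1 g2 y)
      = c^2 * U1 b g1 g2 y / (b^2 * U2 c g1 g2 y) := by
    field_simp
  have hLpos : 0 < (b/c * U2 c g1 g2 y) *
      ((c^2/b^2) * (U1 b g1 g2 y / U2 c g1 g2 y)) ^ (b/(b+c)) := by
    have h2 := H.U2_pos y
    have hb := H.hb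
    have hc := H.hc
    positivity
  have hlog : Real.log ((b/c * U2 c g1 g2 y) *
      ((c^2/b^2) * (U1 b g1 g2 y / U2 c g1 g2 y)) ^ (b/(b+c))) = lCC b c + ell b c g1 g2 y := by
    have hbne : b ≠ 0 := ne_of_gt H.hb
    have hcne : c ≠ 0 := ne_of_gt H.hc
    rw [Real.log_mul (ne_of_gt (mul_pos (div_pos H.hb H.hc) (H.U2_pos y))) (ne_of_gt (Real.rpow_pos_of_pos hApos _)),
      Real.log_rpow hApos, hAeq, H.log_A y,
      Real.log_mul (ne_of_gt (div_pos H.hb H.hc)) (ne_of_gt (H.U2_pos y)), Real.log_div hbne hcne]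
    unfold lCC ell
    have hbcne : b + c ≠ 0 := ne_of_gt H.hbcs
    field_simp
    ring
  rw [← Real.exp_log hLpos, hlog]
  rfl

lemma GG_strictMono : StrictMonoOn (fun y => GG b c g1 g2 y) (Set.Ici 0) := by
  intro x hx y hy hxy
  exact Real.exp_lt_exp.2 (by have := H.ell_strictMono hx hy hxy; simpa using by linarith)

end Hyp

end
end S9

section Inst

variable {μ σ r q : ℝ}

lemma inst_hyp (hμ : 0 < μ) (hσ : 0 < σ) (hr : 0 < r) (hq : 0 < q) :
    S9.Hyp (gam1 μ σ r) (-(gam2 μ σ r)) (gam1 μ σ (r+q)) (gam2 μ σ (r+q)) (2*q/σ^2) := by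
  have hσ2 : (0:ℝ) < σ^2 := by positivity
  have hσ4 : (0:ℝ) < σ^4 := by positivity
  have hm : 0 < μ/σ^2 := div_pos hμ hσ2
  have harg1 : (0:ℝ) ≤ μ^2/σ^4 + 2*r/σ^2 := by positivity
  have harg2 : (0:ℝ) ≤ μ^2/σ^4 + 2*(r+q)/σ^2 := by positivity
  have hs1 : (Real.sqrt (μ^2/σ^4 + 2*r/σ^2))^2 = μ^2/σ^4 + 2*r/σ^2 := Real.sq_sqrt harg1
  have hs2 : (Real.sqrt (μ^2/σ^4 + 2*(r+q)/σ^2))^2 = μ^2/σ^4 + 2*(r+q)/σ^2 := Real.sq_sqrt harg2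
  have hmsq : (μ/σ^2)^2 = μ^2/σ^4 := by
    field_simp
  have hs1m : μ/σ^2 < Real.sqrt (μ^2/σ^4 + 2*r/σ^2) := by
    have h1 : μ/σ^2 = Real.sqrt ((μ/σ^2)^2) := (Real.sqrt_sq (le_of_lt hm)).symm
    rw [h1, hmsq]
    apply Real.sqrt_lt_sqrt (by positivity)
    have : 0 < 2*r/σ^2 := by positivity
    linarith
  have hs12 : Real.sqrt (μ^2/σ^4 + 2*r/σ^2) < Real.sqrt (μ^2/σ^4 + 2*(r+q)/σ^2) := by
    apply Real.sqrt_lt_sqrt harg1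
    have h1 : 2*r/σ^2 < 2*(r+q)/σ^2 := by
      apply (div_lt_div_iff_of_pos_right hσ2).2
      linarith
    linarith
  constructor
  · -- 0 < b
    unfold gam1; linarith
  · -- b < c
    unfold gam1 gam2; linarith
  · -- b < g1
    unfold gam1; linarith
  · -- sum
    unfold gam1 gam2; ring
  · -- prod
    unfold gam1 gam2
    linear_combination hs1 - hs2
  · positivity

lemma hU1e (y : ℝ) : delP μ σ r q y - gam1 μ σ r * del μ σ r q y
    = S9.U1 (gam1 μ σ r) (gam1 μ σ (r+q)) (gam2 μ σ (r+q)) y := by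
  unfold delP del S9.U1; ring

lemma hU2e (y : ℝ) : delP μ σ r q y - -(-(gam2 μ σ r)) * del μ σ r q y
    = S9.U2 (-(gam2 μ σ r)) (gam1 μ σ (r+q)) (gam2 μ σ (r+q)) y := by
  unfold delP del S9.U2; ring

lemma K1_eq (hμ : 0 < μ) (hσ : 0 < σ) (hr : 0 < r) (hq : 0 < q) (y : ℝ) :
    K1 μ σ r q y = (S9.GG (gam1 μ σ r) (-(gam2 μ σ r)) (gam1 μ σ (r+q)) (gam2 μ σ (r+q)) y)⁻¹ := by
  have H := inst_hyp hμ hσ hr hq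
  set b := gam1 μ σ r with hbdef
  set c : ℝ := -(gam2 μ σ r) with hcdef
  have hgc : gam2 μ σ r = -c := by rw [hcdef, neg_neg]
  set g1 := gam1 μ σ (r+q) with hg1def
  set g2 := gam2 μ σ (r+q) with hg2def
  set B := bstarY μ σ r q y with hBdef
  have hbcs := H.hbcs
  have hbcne : b + c ≠ 0 := ne_of_gt hbcs
  have hU1pos := H.U1_pos y
  have hU2pos := H.U2_pos y
  have hb0 := H.hb
  have hc0 := H.hc
  have hApos := H.A_pos y
  set A := c^2 * S9.U1 b g1 g2 y / (b^2 * S9.U2 c g1 g2 y) with hAdef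
  set Ak := A ^ (-(c/(b+c))) with hAkdef
  have hAkpos : 0 < Ak := Real.rpow_pos_of_pos hApos _
  have hU1y : delP μ σ r q y - b * del μ σ r q y = S9.U1 b g1 g2 y := by
    unfold delP del S9.U1; rw [hg1def, hg2def]; ring
  have hU2y : delP μ σ r q y - -c * del μ σ r q y = S9.U2 c g1 g2 y := by
    unfold delP del S9.U2; rw [hg1def, hg2def]; ring
  have hBval : B = y + 1/(b+c) * Real.log A := by
    rw [hBdef]
    unfold bstarY DeltaF
    rw [← hbdef, hgc, hU1y, hU2y, hAdef]
    rw [neg_sq, sub_neg_eq_add]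
  have hbexp : b/(b+c) = 1 + -(c/(b+c)) := by field_simp; ring
  have hexpB1 : Real.exp (b * B) = Real.exp (b * y) * (A * Ak) := by
    rw [hBval, show b*(y + 1/(b+c) * Real.log A) = b*y + Real.log A * (b/(b+c)) from by
      field_simp, Real.exp_add, ← Real.rpow_def_of_pos hApos, hbexp,
      Real.rpow_add hApos, Real.rpow_one, hAkdef]
  have hexpB2 : Real.exp (-c * B) = Real.exp (-c * y) * Ak := by
    rw [hBval, show -c*(y + 1/(b+c) * Real.log A) = -c*y + Real.log A * (-(c/(b+c))) from by
      field_simp; ring, Real.exp_add, ← Real.rpow_def_of_pos hApos, hAkdef]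
  simp only [K1, psiF, psiP, phiF, phiP, etaF, etaP, del, delP, hgc]
  rw [← hbdef, ← hg1def, ← hg2def, hexpB1, hexpB2]
  have hinner_eq : (rexp (g1*y) - rexp (g2*y)) *
        (b * (rexp (b*y)*(A*Ak)) * (-c * rexp (-c*y)) - -c * (rexp (-c*y)*Ak) * (b * rexp (b*y)))
      - (g1 * rexp (g1*y) - g2 * rexp (g2*y)) *
        (b * (rexp (b*y)*(A*Ak)) * rexp (-c*y) - -c * (rexp (-c*y)*Ak) * rexp (b*y))
      = -(rexp (b*y) * rexp (-c*y) * Ak *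
          (b * A * S9.U2 c g1 g2 y + c * S9.U1 b g1 g2 y)) := by
    unfold S9.U1 S9.U2; ring
  have hnum_eq : rexp (b*y) *
        (b * (rexp (b*y)*(A*Ak)) * (-c * rexp (-c*y)) - -c * (rexp (-c*y)*Ak) * (b * rexp (b*y)))
      - b * rexp (b*y) *
        (b * (rexp (b*y)*(A*Ak)) * rexp (-c*y) - -c * (rexp (-c*y)*Ak) * rexp (b*y))
      = -(b * (rexp (b*y)*(A*Ak)) * ((b+c) * (rexp (b*y) * rexp (-c*y)))) := by
    ring
  rw [hinner_eq, hnum_eq]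
  have hsum_pos : 0 < b * A * S9.U2 c g1 g2 y + c * S9.U1 b g1 g2 y := by positivity
  have hfrac : -(b * (rexp (b*y)*(A*Ak)) * ((b+c) * (rexp (b*y) * rexp (-c*y)))) /
      (b * (rexp (b*y)*(A*Ak)) * -(rexp (b*y) * rexp (-c*y) * Ak *
          (b * A * S9.U2 c g1 g2 y + c * S9.U1 b g1 g2 y)))
      = b / (c * (Ak * S9.U1 b g1 g2 y)) := by
    rw [div_eq_div_iff]
    · rw [hAdef]
      field_simp
      ring
    · apply ne_of_lt
      apply mul_neg_of_pos_of_neg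
      · positivity
      · simp only [neg_neg, Left.neg_neg_iff]
        positivity
    · positivity
  rw [hfrac]
  have hlhspos : 0 < b / (c * (Ak * S9.U1 b g1 g2 y)) := by positivity
  have hlog : Real.log (b / (c * (Ak * S9.U1 b g1 g2 y)))
      = -(S9.lCC b c + S9.ell b c g1 g2 y) := by
    rw [Real.log_div (ne_of_gt hb0) (by positivity),
      Real.log_mul (ne_of_gt hc0) (by positivity),
      Real.log_mul (ne_of_gt hAkpos) (ne_of_gt hU1pos), hAkdef,
      Real.log_rpow hApos, hAdef, H.log_A y]
    unfold S9.lCC S9.ell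
    field_simp
    ring
  rw [← Real.exp_log hlhspos, hlog, Real.exp_neg]
  rfl

lemma fF_eq (hμ : 0 < μ) (hσ : 0 < σ) (hr : 0 < r) (hq : 0 < q) (y : ℝ) :
    fF μ σ r q y = S9.GG (gam1 μ σ r) (-(gam2 μ σ r)) (gam1 μ σ (r+q)) (gam2 μ σ (r+q)) y
      - S9.DP (gam1 μ σ (r+q)) (gam2 μ σ (r+q)) (S9.bst (gam1 μ σ (r+q)) (gam2 μ σ (r+q))) := by
  have H := inst_hyp hμ hσ hr hq
  set b := gam1 μ σ r with hbdef
  set c : ℝ := -(gam2 μ σ r) with hcdef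
  have hgc : gam2 μ σ r = -c := by rw [hcdef, neg_neg]
  set g1 := gam1 μ σ (r+q) with hg1def
  set g2 := gam2 μ σ (r+q) with hg2def
  have hU1y : delP μ σ r q y - b * del μ σ r q y = S9.U1 b g1 g2 y := by
    unfold delP del S9.U1; rw [hg1def, hg2def]; ring
  have hU2y : delP μ σ r q y - -c * del μ σ r q y = S9.U2 c g1 g2 y := by
    unfold delP del S9.U2; rw [hg1def, hg2def]; ring
  have hfac : -(b / -c) * delP μ σ r q y + b * del μ σ r q y = b/c * S9.U2 c g1 g2 y := by
    rw [← hU2y]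
    have := H.hc
    field_simp
    ring
  have hbst : bstar μ σ (r+q) = S9.bst g1 g2 := by
    unfold bstar S9.bst; rw [hg1def, hg2def]
  have hDPe : delP μ σ r q (bstar μ σ (r+q)) = S9.DP g1 g2 (S9.bst g1 g2) := by
    rw [hbst]; unfold delP S9.DP; rw [hg1def, hg2def]
  simp only [fF]
  rw [← hbdef, hgc, hU1y, hU2y, hfac, neg_sq, sub_neg_eq_add, hDPe, H.fF_core y]

lemma yUpper_eq (hμ : 0 < μ) (hσ : 0 < σ) (hr : 0 < r) (hq : 0 < q) :
    yUpper μ σ r q = S9.bst (gam1 μ σ (r+q)) (gam2 μ σ (r+q)) +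
      (-(gam2 μ σ r) - gam1 μ σ r) * (2*q/σ^2) /
        (gam1 μ σ r * -(gam2 μ σ r) * (2*q/σ^2 + gam1 μ σ r * -(gam2 μ σ r))) := by
  have hσ2 : (0:ℝ) < σ^2 := by positivity
  have hs1 : (Real.sqrt (μ^2/σ^4 + 2*r/σ^2))^2 = μ^2/σ^4 + 2*r/σ^2 :=
    Real.sq_sqrt (by positivity)
  have hbc2 : gam1 μ σ r * -(gam2 μ σ r) = 2*r/σ^2 := by
    unfold gam1 gam2
    have hmsq : (μ/σ^2)^2 = μ^2/σ^4 := by field_simp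
    linear_combination hs1 - hmsq
  have hcb : -(gam2 μ σ r) - gam1 μ σ r = 2*μ/σ^2 := by
    unfold gam1 gam2; ring
  have hbst : bstar μ σ (r+q) = S9.bst (gam1 μ σ (r+q)) (gam2 μ σ (r+q)) := rfl
  rw [hbc2, hcb]
  unfold yUpper
  rw [hbst]
  have hrne : r ≠ 0 := ne_of_gt hr
  have hrqne : r + q ≠ 0 := by positivity
  have hσne : σ ≠ 0 := ne_of_gt hσ
  field_simp
  ring

end Inst
/-- there exists a unique `y_l ∈ (0,y_u)` with `f(y_l)=0`; it lies in
`(b*_{r+q}, y_u)`, and `K₁(y)δ'(b*_{r+q}) > 1` on `(b*_{r+q}, y_l)` while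
`K₁(y)δ'(b*_{r+q}) < 1` on `(y_l, y_u]`. -/
theorem stmt9 (μ σ r q : ℝ) (hμ : 0 < μ) (hσ : 0 < σ) (hr : 0 < r) (hq : 0 < q) :
    ∃ yl ∈ Set.Ioo 0 (yUpper μ σ r q),
      fF μ σ r q yl = 0 ∧
      (∀ y ∈ Set.Ioo 0 (yUpper μ σ r q), fF μ σ r q y = 0 → y = yl) ∧
      yl ∈ Set.Ioo (bstar μ σ (r+q)) (yUpper μ σ r q) ∧
      (∀ y ∈ Set.Ioo (bstar μ σ (r+q)) yl,
        1 < K1 μ σ r q y * delP μ σ r q (bstar μ σ (r+q))) ∧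
      (∀ y ∈ Set.Ioc yl (yUpper μ σ r q),
        K1 μ σ r q y * delP μ σ r q (bstar μ σ (r+q)) < 1) := by
  have H := inst_hyp hμ hσ hr hq
  set GGf : ℝ → ℝ := fun y => S9.GG (gam1 μ σ r) (-(gam2 μ σ r)) (gam1 μ σ (r+q)) (gam2 μ σ (r+q)) y
    with hGGf
  set DPb : ℝ := S9.DP (gam1 μ σ (r+q)) (gam2 μ σ (r+q))
      (S9.bst (gam1 μ σ (r+q)) (gam2 μ σ (r+q))) with hDPb
  have hfF : ∀ y, fF μ σ r q y = GGf y - DPb := fun y => fF_eq hμ hσ hr hq y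
  have hbst_eq : bstar μ σ (r+q) = S9.bst (gam1 μ σ (r+q)) (gam2 μ σ (r+q)) := rfl
  have hDPbst : delP μ σ r q (bstar μ σ (r+q)) = DPb := rfl
  have hbstpos : 0 < bstar μ σ (r+q) := H.bst_pos
  have hd : 0 < (-(gam2 μ σ r) - gam1 μ σ r) * (2*q/σ^2) /
        (gam1 μ σ r * -(gam2 μ σ r) * (2*q/σ^2 + gam1 μ σ r * -(gam2 μ σ r))) := by
    apply div_pos (mul_pos (by linarith [H.hbc]) H.hQ)
      (mul_pos (mul_pos H.hb H.hc) H.hQbc)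
  have hyu := yUpper_eq hμ hσ hr hq
  have hbyu : bstar μ σ (r+q) < yUpper μ σ r q := by
    rw [hyu, hbst_eq]; linarith
  have hlow : GGf (bstar μ σ (r+q)) < DPb := H.GG_bst_lt
  have hhigh : DPb < GGf (yUpper μ σ r q) := by
    rw [hyu]; exact H.GG_yu_gt
  have hDPpos : 0 < DPb := H.DP_bst_pos
  have hGGmono : StrictMonoOn GGf (Set.Ici 0) := H.GG_strictMono
  have hGGpos : ∀ y, 0 < GGf y := fun y => S9.Hyp.GG_pos y
  have hmono : StrictMonoOn (fF μ σ r q) (Set.Ici 0) := by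
    intro x hx z hz hxz
    rw [hfF x, hfF z]
    have := hGGmono hx hz hxz
    linarith
  have hcont : ContinuousOn (fF μ σ r q) (Set.Icc (bstar μ σ (r+q)) (yUpper μ σ r q)) := by
    intro x _
    apply ContinuousAt.continuousWithinAt
    have h1 : ContinuousAt (fun t => S9.ell (gam1 μ σ r) (-(gam2 μ σ r)) (gam1 μ σ (r+q))
        (gam2 μ σ (r+q)) t) x := (H.hasDerivAt_ell x).continuousAt
    have h2 : ContinuousAt GGf x := by
      rw [hGGf]
      exact Real.continuous_exp.continuousAt.comp (continuousAt_const.add h1)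
    have h3 : ContinuousAt (fun y => GGf y - DPb) x := h2.sub continuousAt_const
    have : fF μ σ r q = fun y => GGf y - DPb := funext hfF
    rw [this]
    exact h3
  have hivt := intermediate_value_Ioo (le_of_lt hbyu) hcont
  have h0mem : (0:ℝ) ∈ Set.Ioo (fF μ σ r q (bstar μ σ (r+q))) (fF μ σ r q (yUpper μ σ r q)) := by
    constructor
    · rw [hfF]; linarith
    · rw [hfF]; linarith
  obtain ⟨yl, hylmem, hylval⟩ := hivt h0mem
  have hylpos : 0 < yl := lt_trans hbstpos hylmem.1
  have hGGyl : GGf yl = DPb := by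
    have := hfF yl
    rw [hylval] at this
    linarith
  refine ⟨yl, ⟨hylpos, hylmem.2⟩, hylval, ?_, ⟨hylmem.1, hylmem.2⟩, ?_, ?_⟩
  · -- uniqueness
    intro z hz hfz
    by_contra hne
    rcases lt_or_gt_of_ne hne with h | h
    · have := hmono (Set.mem_Ici.2 (le_of_lt hz.1)) (Set.mem_Ici.2 (le_of_lt hylpos)) h
      rw [hfz, hylval] at this
      exact lt_irrefl 0 this
    · have := hmono (Set.mem_Ici.2 (le_of_lt hylpos)) (Set.mem_Ici.2 (le_of_lt hz.1)) h
      rw [hfz, hylval] at this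
      exact lt_irrefl 0 this
  · -- 1 < K1 * delP on (bstar, yl)
    intro z hz
    have hzpos : 0 < z := lt_trans hbstpos hz.1
    have hlt : fF μ σ r q z < 0 := by
      have := hmono (Set.mem_Ici.2 (le_of_lt hzpos)) (Set.mem_Ici.2 (le_of_lt hylpos)) hz.2
      rw [hylval] at this
      exact this
    have hGlt : GGf z < DPb := by
      have := hfF z
      linarith
    rw [K1_eq hμ hσ hr hq z, hDPbst]
    rw [show (GGf z)⁻¹ * DPb = DPb / GGf z from by rw [div_eq_mul_inv, mul_comm]]
    exact (one_lt_div (hGGpos z)).2 hGlt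
  · -- K1 * delP < 1 on (yl, yUpper]
    intro z hz
    have hzpos : 0 < z := lt_trans hylpos hz.1
    have hgt : 0 < fF μ σ r q z := by
      have := hmono (Set.mem_Ici.2 (le_of_lt hylpos)) (Set.mem_Ici.2 (le_of_lt hzpos)) hz.1
      rw [hylval] at this
      exact this
    have hGgt : DPb < GGf z := by
      have := hfF z
      linarith
    rw [K1_eq hμ hσ hr hq z, hDPbst]
    rw [show (GGf z)⁻¹ * DPb = DPb / GGf z from by rw [div_eq_mul_inv, mul_comm]]
    exact (div_lt_one (hGGpos z)).2 hGgt
end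

section
/- At the critical level y_l one has K₁(y_l) = 1/(γ₁(r+q)e^{γ₁(r+q)b*_{r+q}} − γ₂(r+q)e^{γ₂(r+q)b*_{r+q}}), and consequently K₁(y_l)·(e^{γ₁(r+q)x} − e^{γ₂(r+q)x}) = V_{r+q}(x) for all x ∈ [0, b*_{r+q}]. -/
open Real Set Filter

set_option maxHeartbeats 2000000

section Aux

lemma sqrt_gt_aux (μ σ ρ : ℝ) (hμ : 0 < μ) (hσ : 0 < σ) (hρ : 0 < ρ) :
    μ/σ^2 < Real.sqrt (μ^2/σ^4 + 2*ρ/σ^2) := by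
  rw [show μ^2/σ^4 + 2*ρ/σ^2 = (μ/σ^2)^2 + 2*ρ/σ^2 by field_simp]
  refine (Real.lt_sqrt (by positivity)).mpr ?_
  have : (0:ℝ) < 2*ρ/σ^2 := by positivity
  linarith

lemma gam1_pos (μ σ ρ : ℝ) (hμ : 0 < μ) (hσ : 0 < σ) (hρ : 0 < ρ) : 0 < gam1 μ σ ρ :=
  sub_pos.mpr (sqrt_gt_aux μ σ ρ hμ hσ hρ)

lemma gam2_neg (μ σ ρ : ℝ) (hμ : 0 < μ) (hσ : 0 < σ) (hρ : 0 < ρ) : gam2 μ σ ρ < 0 := by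
  have h1 : 0 ≤ Real.sqrt (μ^2/σ^4 + 2*ρ/σ^2) := Real.sqrt_nonneg _
  have h2 : 0 < μ/σ^2 := by positivity
  unfold gam2; linarith

lemma gam1_mono (μ σ r r' : ℝ) (hσ : 0 < σ) (hr : 0 ≤ r) (h : r < r') :
    gam1 μ σ r < gam1 μ σ r' := by
  unfold gam1
  have h2 : μ^2/σ^4 + 2*r/σ^2 < μ^2/σ^4 + 2*r'/σ^2 := by
    have hσ2 : (0:ℝ) < σ^2 := by positivity
    have : 2*r/σ^2 < 2*r'/σ^2 := (div_lt_div_iff_of_pos_right hσ2).mpr (by linarith)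
    linarith
  have h3 : (0:ℝ) ≤ μ^2/σ^4 + 2*r/σ^2 := by
    have : (0:ℝ) ≤ 2*r/σ^2 := div_nonneg (by linarith) (by positivity)
    positivity
  have := Real.sqrt_lt_sqrt h3 h2
  linarith

lemma gam2_anti (μ σ r r' : ℝ) (hσ : 0 < σ) (hr : 0 ≤ r) (h : r < r') :
    gam2 μ σ r' < gam2 μ σ r := by
  unfold gam2
  have h2 : μ^2/σ^4 + 2*r/σ^2 < μ^2/σ^4 + 2*r'/σ^2 := by
    have hσ2 : (0:ℝ) < σ^2 := by positivity
    have : 2*r/σ^2 < 2*r'/σ^2 := (div_lt_div_iff_of_pos_right hσ2).mpr (by linarith)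
    linarith
  have h3 : (0:ℝ) ≤ μ^2/σ^4 + 2*r/σ^2 := by
    have : (0:ℝ) ≤ 2*r/σ^2 := div_nonneg (by linarith) (by positivity)
    positivity
  have := Real.sqrt_lt_sqrt h3 h2
  linarith

end Aux

/-- at the critical level `y_l` one has
`K₁(y_l) = 1/(γ₁(r+q)e^{γ₁(r+q)b*_{r+q}} − γ₂(r+q)e^{γ₂(r+q)b*_{r+q}})` and
`K₁(y_l)(e^{γ₁(r+q)x} − e^{γ₂(r+q)x}) = V_{r+q}(x)` for all `x ∈ [0,b*_{r+q}]`. -/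
theorem stmt10 (μ σ r q : ℝ) (hμ : 0 < μ) (hσ : 0 < σ) (hr : 0 < r) (hq : 0 < q)
    (yl : ℝ) (hyl : yl ∈ Set.Ioo 0 (yUpper μ σ r q)) (hylf : fF μ σ r q yl = 0)
    (hyluniq : ∀ y ∈ Set.Ioo 0 (yUpper μ σ r q), fF μ σ r q y = 0 → y = yl)
    (hylb : yl ∈ Set.Ioo (bstar μ σ (r+q)) (yUpper μ σ r q)) :
    K1 μ σ r q yl =
      1 / (gam1 μ σ (r+q) * Real.exp (gam1 μ σ (r+q) * bstar μ σ (r+q)) -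
        gam2 μ σ (r+q) * Real.exp (gam2 μ σ (r+q) * bstar μ σ (r+q))) ∧
    ∀ x ∈ Set.Icc 0 (bstar μ σ (r+q)),
      K1 μ σ r q yl * (Real.exp (gam1 μ σ (r+q) * x) - Real.exp (gam2 μ σ (r+q) * x)) =
        Vfun μ σ (r+q) x := by
  have hg1 : 0 < gam1 μ σ r := gam1_pos μ σ r hμ hσ hr
  have hg2 : gam2 μ σ r < 0 := gam2_neg μ σ r hμ hσ hr
  have ha1 : 0 < gam1 μ σ (r+q) := gam1_pos μ σ (r+q) hμ hσ (by linarith)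
  have ha2 : gam2 μ σ (r+q) < 0 := gam2_neg μ σ (r+q) hμ hσ (by linarith)
  have hg1a1 : gam1 μ σ r < gam1 μ σ (r+q) := gam1_mono μ σ r (r+q) hσ (by linarith) (by linarith)
  have ha2g2 : gam2 μ σ (r+q) < gam2 μ σ r := gam2_anti μ σ r (r+q) hσ (by linarith) (by linarith)
  have hg12 : gam1 μ σ r - gam2 μ σ r ≠ 0 := by linarith
  -- abbreviations
  set g1 := gam1 μ σ r with hg1def
  set g2 := gam2 μ σ r with hg2def
  set a1 := gam1 μ σ (r+q) with ha1def
  set a2 := gam2 μ σ (r+q) with ha2def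
  set D := del μ σ r q yl with hDdef
  set Dp := delP μ σ r q yl with hDpdef
  have hP : 0 < Dp - g1 * D := by
    have : Dp - g1 * D = (a1 - g1) * Real.exp (a1 * yl) + (g1 - a2) * Real.exp (a2 * yl) := by
      rw [hDdef, hDpdef]; unfold del delP; ring
    rw [this]
    have e1 := Real.exp_pos (a1 * yl)
    have e2 := Real.exp_pos (a2 * yl)
    nlinarith
  have hQ : 0 < Dp - g2 * D := by
    have : Dp - g2 * D = (a1 - g2) * Real.exp (a1 * yl) + (g2 - a2) * Real.exp (a2 * yl) := by
      rw [hDdef, hDpdef]; unfold del delP; ring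
    rw [this]
    have e1 := Real.exp_pos (a1 * yl)
    have e2 := Real.exp_pos (a2 * yl)
    nlinarith
  set A := g2 ^ 2 * (Dp - g1 * D) / (g1 ^ 2 * (Dp - g2 * D)) with hAdef
  have hApos : 0 < A := by
    apply div_pos
    · exact mul_pos (by nlinarith) hP
    · exact mul_pos (by positivity) hQ
  set c1 := Real.exp (g1 * ((1/(g1 - g2)) * Real.log A)) with hc1def
  set c2 := Real.exp (g2 * ((1/(g1 - g2)) * Real.log A)) with hc2def
  have hc1pos : 0 < c1 := Real.exp_pos _
  have hc2pos : 0 < c2 := Real.exp_pos _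
  set E1 := Real.exp (g1 * yl) with hE1def
  set E2 := Real.exp (g2 * yl) with hE2def
  have hE1pos : 0 < E1 := Real.exp_pos _
  have hE2pos : 0 < E2 := Real.exp_pos _
  have hb : bstarY μ σ r q yl = yl + (1/(g1 - g2)) * Real.log A := rfl
  have h1 : Real.exp (g1 * bstarY μ σ r q yl) = E1 * c1 := by
    rw [hb, mul_add, Real.exp_add]
  have h2 : Real.exp (g2 * bstarY μ σ r q yl) = E2 * c2 := by
    rw [hb, mul_add, Real.exp_add]
  -- c1 as rpow
  have hc1pow : c1 = A ^ (g1 / (g1 - g2)) := by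
    rw [Real.rpow_def_of_pos hApos, hc1def]
    exact congrArg Real.exp (by ring)
  -- relation between c1 and c2
  have hc1c2 : c1 = A * c2 := by
    rw [hc1def, hc2def, show g1 * ((1/(g1 - g2)) * Real.log A)
        = Real.log A + g2 * ((1/(g1 - g2)) * Real.log A) by field_simp; ring,
      Real.exp_add, Real.exp_log hApos]
  have hrel : g1 ^ 2 * (Dp - g2 * D) * c1 = g2 ^ 2 * (Dp - g1 * D) * c2 := by
    rw [hc1c2, hAdef]; field_simp
  -- value of K1
  have hK1val : K1 μ σ r q yl = -g2 / (g1 * (Dp - g2 * D) * c1) := by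
    unfold K1 etaF etaP psiF psiP phiF phiP
    rw [← hDdef, ← hDpdef, ← hg1def, ← hg2def, h1, h2, ← hE1def, ← hE2def]
    have hDenEq : D * (g1 * (E1 * c1) * (g2 * E2) - g2 * (E2 * c2) * (g1 * E1)) -
          Dp * (g1 * (E1 * c1) * E2 - g2 * (E2 * c2) * E1)
        = g2 * (Dp - g1 * D) * (g1 - g2) * (E1 * E2 * c2) / g1 := by
      have hg1ne : g1 ≠ 0 := ne_of_gt hg1
      field_simp
      linear_combination (-1) * hrel
    have hd1 : g1 * (E1 * c1) *
        (D * (g1 * (E1 * c1) * (g2 * E2) - g2 * (E2 * c2) * (g1 * E1)) -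
          Dp * (g1 * (E1 * c1) * E2 - g2 * (E2 * c2) * E1)) ≠ 0 := by
      rw [hDenEq]
      have h12 : (0:ℝ) < g1 - g2 := by linarith
      have hneg : g2 * (Dp - g1 * D) * (g1 - g2) * (E1 * E2 * c2) / g1 < 0 := by
        apply div_neg_of_neg_of_pos _ hg1
        have hpos : 0 < (Dp - g1 * D) * (g1 - g2) * (E1 * E2 * c2) := by positivity
        nlinarith
      exact ne_of_lt (mul_neg_of_pos_of_neg (by positivity) hneg)
    have hd2 : g1 * (Dp - g2 * D) * c1 ≠ 0 := ne_of_gt (mul_pos (mul_pos hg1 hQ) hc1pos)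
    rw [div_eq_div_iff hd1 hd2]
    linear_combination (-(g1 * E1^2 * E2 * c1)) * hrel
  -- use the equation f(y_l) = 0
  have hbase : g2 ^ 2 / g1 ^ 2 * ((Dp - g1 * D) / (Dp - g2 * D)) = A := by
    rw [hAdef, div_mul_div_comm]
  have hKey : delP μ σ r q (bstar μ σ (r+q)) = (-(g1 / g2) * Dp + g1 * D) * c1 := by
    have hf := hylf
    unfold fF at hf
    rw [← hg1def, ← hg2def, ← hDdef, ← hDpdef, hbase, ← hc1pow] at hf
    linarith
  have hcoef : 0 < -(g1 / g2) * (Dp - g2 * D) := by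
    have : 0 < -(g1 / g2) := by
      have : g1 / g2 < 0 := div_neg_of_pos_of_neg hg1 hg2
      linarith
    exact mul_pos this hQ
  have hpart1 : K1 μ σ r q yl = 1 / delP μ σ r q (bstar μ σ (r+q)) := by
    rw [hK1val, hKey]
    have hd3 : (-(g1 / g2) * Dp + g1 * D) * c1 ≠ 0 := by
      have hg2ne' : g2 ≠ 0 := ne_of_lt hg2
      have he : -(g1 / g2) * Dp + g1 * D = -(g1 / g2) * (Dp - g2 * D) := by
        field_simp
        ring
      rw [he]
      exact ne_of_gt (mul_pos hcoef hc1pos)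
    rw [div_eq_div_iff (ne_of_gt (mul_pos (mul_pos hg1 hQ) hc1pos)) hd3]
    have hg2ne : g2 ≠ 0 := ne_of_lt hg2
    field_simp
    ring
  have hfold : a1 * Real.exp (a1 * bstar μ σ (r+q)) - a2 * Real.exp (a2 * bstar μ σ (r+q))
      = delP μ σ r q (bstar μ σ (r+q)) := rfl
  constructor
  · rw [hfold]; exact hpart1
  · intro x hx
    by_cases hxb : x < bstar μ σ (r+q)
    · simp only [Vfun, if_pos hxb]
      rw [← ha1def, ← ha2def, hfold, hpart1]
      rw [one_div, inv_mul_eq_div]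
    · have hxe : x = bstar μ σ (r+q) := le_antisymm hx.2 (not_lt.mp hxb)
      simp only [Vfun, if_neg hxb]
      rw [← ha1def, ← ha2def, hfold, hpart1, hxe]
      ring
end
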